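/- arXiv:2602.10962 — 4 statements merged into one kernel-verified Lean document; each statement's English description precedes it below -/
import Mathlib

section
/- For Hermitian positive definite matrices A and B of order n, if U is unitary with U*BU = diag(b_1,...,b_n) and U*AU = [c_ij], then the Fréchet derivative of the matrix logarithm at B in direction A satisfies Dlog[B](A) = U [c_ij (log b_i - log b_j)/(b_i - b_j)] U*, where the quotient is interpreted as 1/b_i when b_i = b_j. -/
open Matrix Filter
open MeasureTheory Set Topology Finset
open scoped ComplexOrder

/-- The matrix logarithm of a Hermitian matrix, via the continuous functional calculus. -/
noncomputable def mlog {n : ℕ} (A : Matrix (Fin n) (Fin n) ℂ) : Matrix (Fin n) (Fin n) ℂ :=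
  cfc Real.log A

/-- The divided difference of `Real.log`, interpreted as `1/b` on the diagonal. -/
noncomputable def logDD (a b : ℝ) : ℝ :=
  if a = b then a⁻¹ else (Real.log a - Real.log b) / (a - b)

namespace FrechetAux

open MeasureTheory Set Topology Finset

lemma logDD_integral {a c : ℝ} (ha : 0 < a) (hc : 0 < c) :
    IntegrableOn (fun s : ℝ => ((a + s) * (c + s))⁻¹) (Ioi 0) ∧
      ∫ s in Ioi 0, ((a + s) * (c + s))⁻¹ = logDD a c := by
  rcases eq_or_ne a c with rfl | hac
  · have hderiv : ∀ s ∈ Ioi (0:ℝ), HasDerivAt (fun s => -(a + s)⁻¹) (((a+s)*(a+s))⁻¹) s := by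
      intro s hs
      have hs' : (0:ℝ) < s := hs
      have h1 : (0:ℝ) < a + s := by positivity
      have : HasDerivAt (fun s : ℝ => a + s) 1 s := by
        simpa using (hasDerivAt_id s).const_add a
      have := (this.inv h1.ne').neg
      refine this.congr_deriv ?_
      field_simp
    have hcont : ContinuousWithinAt (fun s : ℝ => -(a + s)⁻¹) (Ici 0) 0 := by
      apply ContinuousAt.continuousWithinAt
      have : (0:ℝ) < a + 0 := by simpa using ha
      fun_prop (disch := positivity)
    have hpos : ∀ s ∈ Ioi (0:ℝ), 0 ≤ ((a+s)*(a+s))⁻¹ := by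
      intro s hs; have hs' : (0:ℝ) < s := hs; positivity
    have htend : Tendsto (fun s : ℝ => -(a + s)⁻¹) atTop (𝓝 0) := by
      rw [show (0:ℝ) = -0 by ring]
      exact ((tendsto_inv_atTop_zero.comp (tendsto_atTop_add_const_left _ a tendsto_id))).neg
    refine ⟨integrableOn_Ioi_deriv_of_nonneg hcont hderiv hpos htend, ?_⟩
    rw [integral_Ioi_of_hasDerivAt_of_nonneg hcont hderiv hpos htend]
    simp [logDD, ha.ne']
  · have hderiv : ∀ s ∈ Ioi (0:ℝ), HasDerivAt
        (fun s => (Real.log (c + s) - Real.log (a + s)) / (a - c)) (((a+s)*(c+s))⁻¹) s := by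
      intro s hs
      have hs' : (0:ℝ) < s := hs
      have h1 : (0:ℝ) < a + s := by positivity
      have h2 : (0:ℝ) < c + s := by positivity
      have hid : HasDerivAt (fun s : ℝ => c + s) 1 s := by
        simpa using (hasDerivAt_id s).const_add c
      have hid' : HasDerivAt (fun s : ℝ => a + s) 1 s := by
        simpa using (hasDerivAt_id s).const_add a
      have hl2 : HasDerivAt (fun s : ℝ => Real.log (c + s)) ((c+s)⁻¹) s := by
        simpa [Function.comp_def] using (Real.hasDerivAt_log h2.ne').comp s hid
      have hl1 : HasDerivAt (fun s : ℝ => Real.log (a + s)) ((a+s)⁻¹) s := by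
        simpa [Function.comp_def] using (Real.hasDerivAt_log h1.ne').comp s hid'
      have := (hl2.sub hl1).div_const (a - c)
      refine this.congr_deriv ?_
      have hac' : a - c ≠ 0 := sub_ne_zero.mpr hac
      field_simp
      ring
    have hcont : ContinuousWithinAt
        (fun s => (Real.log (c + s) - Real.log (a + s)) / (a - c)) (Ici 0) 0 := by
      apply ContinuousAt.continuousWithinAt
      have h1 : a + 0 ≠ 0 := by positivity
      have h2 : c + 0 ≠ 0 := by positivity
      fun_prop (disch := assumption)
    have hpos : ∀ s ∈ Ioi (0:ℝ), 0 ≤ ((a+s)*(c+s))⁻¹ := by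
      intro s hs; have hs' : (0:ℝ) < s := hs; positivity
    have htend : Tendsto (fun s => (Real.log (c + s) - Real.log (a + s)) / (a - c)) atTop (𝓝 0) := by
      have h0 : Tendsto (fun s : ℝ => Real.log (c + s) - Real.log (a + s)) atTop (𝓝 0) := by
        have hinv : Tendsto (fun s : ℝ => (a + s)⁻¹) atTop (𝓝 0) :=
          tendsto_inv_atTop_zero.comp (tendsto_atTop_add_const_left _ a tendsto_id)
        have h1 : Tendsto (fun s : ℝ => 1 + (c - a) * (a + s)⁻¹) atTop (𝓝 1) := by
          simpa using (hinv.const_mul (c - a)).const_add 1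
        have h2 := (Real.continuousAt_log one_ne_zero).tendsto.comp h1
        rw [Real.log_one] at h2
        apply h2.congr'
        filter_upwards [eventually_gt_atTop 0] with s hs
        have h1' : (0:ℝ) < a + s := by positivity
        have h2' : (0:ℝ) < c + s := by positivity
        rw [Function.comp_apply]
        have he : 1 + (c - a) * (a + s)⁻¹ = (c + s) / (a + s) := by field_simp; ring
        rw [he, Real.log_div h2'.ne' h1'.ne']
      simpa using h0.div_const (a - c)
    refine ⟨integrableOn_Ioi_deriv_of_nonneg hcont hderiv hpos htend, ?_⟩
    rw [integral_Ioi_of_hasDerivAt_of_nonneg hcont hderiv hpos htend]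
    simp only [logDD, hac, if_false]
    rw [zero_sub]
    simp only [add_zero]
    ring


lemma log_integral {x : ℝ} (hx : 0 < x) :
    IntegrableOn (fun s : ℝ => (1 + s)⁻¹ - (x + s)⁻¹) (Ioi 0) ∧
      ∫ s in Ioi 0, ((1 + s)⁻¹ - (x + s)⁻¹) = Real.log x := by
  obtain ⟨hint, hval⟩ := logDD_integral one_pos hx
  have he : EqOn (fun s : ℝ => (x - 1) * ((1 + s) * (x + s))⁻¹)
      (fun s : ℝ => (1 + s)⁻¹ - (x + s)⁻¹) (Ioi 0) := by
    intro s hs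
    have hs' : (0:ℝ) < s := hs
    have h1 : (1:ℝ) + s ≠ 0 := by positivity
    have h2 : x + s ≠ 0 := by positivity
    show (x - 1) * ((1 + s) * (x + s))⁻¹ = (1 + s)⁻¹ - (x + s)⁻¹
    rw [inv_sub_inv h1 h2, div_eq_mul_inv]
    ring
  have hint1 : IntegrableOn (fun s : ℝ => (x - 1) * ((1 + s) * (x + s))⁻¹) (Ioi 0) :=
    hint.const_mul (x - 1)
  have hint2 : IntegrableOn (fun s : ℝ => (1 + s)⁻¹ - (x + s)⁻¹) (Ioi 0) :=
    hint1.congr_fun he measurableSet_Ioi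
  refine ⟨hint2, ?_⟩
  rw [← setIntegral_congr_fun measurableSet_Ioi he, integral_const_mul, hval]
  unfold logDD
  rcases eq_or_ne (1:ℝ) x with h1x | h1x
  · simp [← h1x]
  · rw [if_neg h1x, Real.log_one]
    have h1x' : (1:ℝ) - x ≠ 0 := sub_ne_zero.mpr h1x
    field_simp
    ring


variable {n : ℕ}

lemma conj_diag_apply (V : Matrix (Fin n) (Fin n) ℂ) (d : Fin n → ℂ) (i j : Fin n) :
    (V * diagonal d * star V) i j = ∑ k, V i k * d k * (starRingEnd ℂ) (V j k) := by
  rw [Matrix.mul_apply]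
  refine Finset.sum_congr rfl fun k _ => ?_
  rw [Matrix.mul_diagonal, Matrix.star_eq_conjTranspose, Matrix.conjTranspose_apply]
  rfl


lemma triple_apply (P Q R : Matrix (Fin n) (Fin n) ℂ) (i j : Fin n) :
    (P * Q * R) i j = ∑ k, ∑ l, P i k * Q k l * R l j := by
  rw [Matrix.mul_apply]
  simp_rw [Matrix.mul_apply, Finset.sum_mul]
  rw [Finset.sum_comm]


lemma conj_diag_inv {V : Matrix (Fin n) (Fin n) ℂ} (hV : V ∈ Matrix.unitaryGroup (Fin n) ℂ)
    {d : Fin n → ℂ} (hd : ∀ k, d k ≠ 0) :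
    (V * diagonal d * star V)⁻¹ = V * diagonal (fun k => (d k)⁻¹) * star V := by
  have h1 : star V * V = 1 := Matrix.mem_unitaryGroup_iff'.mp hV
  have h2 : V * star V = 1 := Matrix.mem_unitaryGroup_iff.mp hV
  apply Matrix.inv_eq_right_inv
  calc V * diagonal d * star V * (V * diagonal (fun k => (d k)⁻¹) * star V)
      = V * diagonal d * ((star V * V) * diagonal (fun k => (d k)⁻¹)) * star V := by
        simp only [Matrix.mul_assoc]
    _ = V * (diagonal d * diagonal fun k => (d k)⁻¹) * star V := by
        rw [h1, Matrix.one_mul, Matrix.mul_assoc V]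
    _ = 1 := by
        rw [Matrix.diagonal_mul_diagonal]
        simp only [mul_inv_cancel₀ (hd _)]
        rw [Matrix.diagonal_one, Matrix.mul_one, h2]


lemma star_dot_self (x : Fin n → ℂ) :
    star x ⬝ᵥ x = ((∑ k, Complex.normSq (x k) : ℝ) : ℂ) := by
  simp only [dotProduct, Pi.star_apply]
  push_cast
  refine Finset.sum_congr rfl fun k _ => ?_
  rw [Complex.star_def, mul_comm, Complex.mul_conj]


lemma form_conj {V : Matrix (Fin n) (Fin n) ℂ} (d : Fin n → ℂ) (x : Fin n → ℂ) :
    star x ⬝ᵥ ((V * diagonal d * star V) *ᵥ x)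
      = ∑ k, d k * ((Complex.normSq ((star V *ᵥ x) k) : ℝ) : ℂ) := by
  set y := star V *ᵥ x with hy
  have hsy : star x ᵥ* V = star y := by
    rw [hy, Matrix.star_mulVec, Matrix.star_eq_conjTranspose, Matrix.conjTranspose_conjTranspose]
  rw [← Matrix.mulVec_mulVec, ← Matrix.mulVec_mulVec, Matrix.dotProduct_mulVec, hsy]
  simp only [dotProduct, Pi.star_apply, Matrix.mulVec_diagonal]
  refine Finset.sum_congr rfl fun k _ => ?_
  rw [Complex.star_def]
  rw [show (starRingEnd ℂ) (y k) * (d k * y k) = d k * (y k * (starRingEnd ℂ) (y k)) by ring,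
    Complex.mul_conj]


lemma sum_normSq_conj {V : Matrix (Fin n) (Fin n) ℂ} (hV : V ∈ Matrix.unitaryGroup (Fin n) ℂ)
    (x : Fin n → ℂ) :
    ∑ k, Complex.normSq ((star V *ᵥ x) k) = ∑ k, Complex.normSq (x k) := by
  have h := form_conj (V := V) (fun _ => (1:ℂ)) x
  rw [Matrix.diagonal_one, Matrix.mul_one, Matrix.mem_unitaryGroup_iff.mp hV, Matrix.one_mulVec,
    star_dot_self] at h
  simp only [one_mul] at h
  have : ((∑ k, Complex.normSq (x k) : ℝ) : ℂ) = ((∑ k, Complex.normSq ((star V *ᵥ x) k) : ℝ) : ℂ) := by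
    rw [h]; push_cast; ring
  exact_mod_cast this.symm


lemma im_form_eq_zero {M : Matrix (Fin n) (Fin n) ℂ} (hM : M.IsHermitian) (x : Fin n → ℂ) :
    (star x ⬝ᵥ M *ᵥ x).im = 0 := by
  have h : star (star x ⬝ᵥ M *ᵥ x) = star x ⬝ᵥ M *ᵥ x := by
    conv_lhs => rw [Matrix.star_dotProduct]
    rw [star_star, Matrix.star_mulVec, ← Matrix.dotProduct_mulVec, hM.eq]
  have := congrArg Complex.im h
  simp only [Complex.star_def, Complex.conj_im] at this
  linarith


lemma inv_entry_bound {M : Matrix (Fin n) (Fin n) ℂ} {c : ℝ} (hc : 0 < c)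
    (h : ∀ x : Fin n → ℂ, c * ∑ k, Complex.normSq (x k) ≤ (star x ⬝ᵥ M *ᵥ x).re) :
    IsUnit M.det ∧ ∀ i j, ‖M⁻¹ i j‖ ≤ c⁻¹ := by
  have sum_pos : ∀ x : Fin n → ℂ, x ≠ 0 → 0 < ∑ k, Complex.normSq (x k) := by
    intro x hx
    obtain ⟨k, hk⟩ := Function.ne_iff.mp hx
    exact Finset.sum_pos' (fun k _ => Complex.normSq_nonneg _)
      ⟨k, Finset.mem_univ k, Complex.normSq_pos.mpr hk⟩
  have hdet : IsUnit M.det := by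
    rw [isUnit_iff_ne_zero]
    intro h0
    obtain ⟨v, hv, hMv⟩ := (Matrix.exists_mulVec_eq_zero_iff).mpr h0
    have := h v
    rw [hMv] at this
    simp only [dotProduct_zero, Complex.zero_re] at this
    nlinarith [sum_pos v hv, hc]
  refine ⟨hdet, fun i j => ?_⟩
  set x := M⁻¹ *ᵥ Pi.single j 1 with hx
  have hMx : M *ᵥ x = Pi.single j 1 := by
    rw [hx, Matrix.mulVec_mulVec, Matrix.mul_nonsing_inv _ hdet, Matrix.one_mulVec]
  set S := ∑ k, Complex.normSq (x k) with hS
  have hS0 : 0 ≤ S := Finset.sum_nonneg fun k _ => Complex.normSq_nonneg _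
  have key : c * S ≤ Real.sqrt S := by
    have h1 := h x
    rw [hMx] at h1
    have h2 : (star x ⬝ᵥ Pi.single j 1).re ≤ Real.sqrt S := by
      rw [dotProduct_single, mul_one]
      calc (star x j).re ≤ ‖star x j‖ := Complex.re_le_norm _
        _ = ‖x j‖ := by rw [Pi.star_apply, Complex.star_def, Complex.norm_conj]
        _ = Real.sqrt (Complex.normSq (x j)) := by rw [Complex.norm_def]
        _ ≤ Real.sqrt S := Real.sqrt_le_sqrt (Finset.single_le_sum
            (fun k _ => Complex.normSq_nonneg _) (Finset.mem_univ j))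
    exact h1.trans h2
  have hsqrt : Real.sqrt S ≤ c⁻¹ := by
    rcases eq_or_lt_of_le hS0 with h0 | h0
    · rw [← h0, Real.sqrt_zero]; positivity
    · have hr : 0 < Real.sqrt S := Real.sqrt_pos.mpr h0
      have hss : S = Real.sqrt S * Real.sqrt S := (Real.mul_self_sqrt hS0).symm
      rw [inv_eq_one_div, le_div_iff₀ hc]
      nlinarith [key, hss, hr]
  have hxe : x i = M⁻¹ i j := by
    simp [hx, Matrix.mulVec_single]
  calc ‖M⁻¹ i j‖ = Real.sqrt (Complex.normSq (x i)) := by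
        rw [← hxe]; rw [Complex.norm_def]
    _ ≤ Real.sqrt S := Real.sqrt_le_sqrt (Finset.single_le_sum
        (fun k _ => Complex.normSq_nonneg _) (Finset.mem_univ i))
    _ ≤ c⁻¹ := hsqrt


lemma inv_sub_inv' {P Q : Matrix (Fin n) (Fin n) ℂ} (hP : IsUnit P.det) (hQ : IsUnit Q.det) :
    P⁻¹ - Q⁻¹ = P⁻¹ * (Q - P) * Q⁻¹ := by
  rw [Matrix.mul_sub, Matrix.sub_mul, Matrix.mul_assoc, Matrix.mul_nonsing_inv _ hQ,
    Matrix.mul_one, Matrix.nonsing_inv_mul _ hP, Matrix.one_mul]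


variable {X : Matrix (Fin n) (Fin n) ℂ}

lemma shift_eq (hX : X.PosDef) (s : ℝ) :
    X + (s:ℂ) • 1 = (hX.1.eigenvectorUnitary : Matrix (Fin n) (Fin n) ℂ) *
      diagonal (fun k => ((hX.1.eigenvalues k : ℂ) + s)) *
      star (hX.1.eigenvectorUnitary : Matrix (Fin n) (Fin n) ℂ) := by
  set V := (hX.1.eigenvectorUnitary : Matrix (Fin n) (Fin n) ℂ)
  have hV2 : V * star V = 1 := Matrix.mem_unitaryGroup_iff.mp hX.1.eigenvectorUnitary.2
  have h1 : (s:ℂ) • (1 : Matrix (Fin n) (Fin n) ℂ)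
      = V * diagonal (fun _ : Fin n => (s:ℂ)) * star V := by
    have : diagonal (fun _ : Fin n => (s:ℂ)) = (s:ℂ) • (1 : Matrix (Fin n) (Fin n) ℂ) := by
      ext k l
      by_cases h : k = l <;>
        simp [Matrix.diagonal_apply, Matrix.smul_apply, Matrix.one_apply, h]
    rw [this, Matrix.mul_smul, Matrix.mul_one, Matrix.smul_mul, hV2]
  conv_lhs => rw [hX.1.spectral_theorem, Unitary.conjStarAlgAut_apply, h1]
  rw [← Matrix.add_mul, ← Matrix.mul_add, Matrix.diagonal_add]
  rfl


lemma shift_inv (hX : X.PosDef) {s : ℝ} (hs : 0 ≤ s) :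
    (X + (s:ℂ) • 1)⁻¹ = (hX.1.eigenvectorUnitary : Matrix (Fin n) (Fin n) ℂ) *
      diagonal (fun k => ((hX.1.eigenvalues k : ℂ) + s)⁻¹) *
      star (hX.1.eigenvectorUnitary : Matrix (Fin n) (Fin n) ℂ) := by
  rw [shift_eq hX s]
  apply conj_diag_inv hX.1.eigenvectorUnitary.2
  intro k
  have hk := hX.eigenvalues_pos k
  have : (0:ℝ) < hX.1.eigenvalues k + s := by linarith
  rw [show ((hX.1.eigenvalues k : ℂ) + s) = ((hX.1.eigenvalues k + s : ℝ) : ℂ) by push_cast; ring]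
  exact_mod_cast this.ne'


lemma mlog_eq (hX : X.PosDef) : mlog X = (hX.1.eigenvectorUnitary : Matrix (Fin n) (Fin n) ℂ) *
    diagonal (fun k => ((Real.log (hX.1.eigenvalues k) : ℂ))) *
    star (hX.1.eigenvectorUnitary : Matrix (Fin n) (Fin n) ℂ) := by
  rw [mlog, hX.1.cfc_eq, Matrix.IsHermitian.cfc]
  rfl


lemma mlog_apply (hX : X.PosDef) (i j : Fin n) :
    IntegrableOn (fun s : ℝ => (((1 + s)⁻¹ : ℝ) : ℂ) * (1 : Matrix (Fin n) (Fin n) ℂ) i j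
        - (X + (s:ℂ) • 1)⁻¹ i j) (Ioi 0) ∧
      mlog X i j = ∫ s in Ioi 0, ((((1 + s)⁻¹ : ℝ) : ℂ) * (1 : Matrix (Fin n) (Fin n) ℂ) i j
        - (X + (s:ℂ) • 1)⁻¹ i j) := by
  set V := (hX.1.eigenvectorUnitary : Matrix (Fin n) (Fin n) ℂ) with hVdef
  set lam := hX.1.eigenvalues with hlam
  have hV2 : V * star V = 1 := Matrix.mem_unitaryGroup_iff.mp hX.1.eigenvectorUnitary.2
  set e : Fin n → ℂ := fun k => V i k * (starRingEnd ℂ) (V j k) with he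
  have hone : (1 : Matrix (Fin n) (Fin n) ℂ) i j = ∑ k, e k := by
    rw [← hV2, Matrix.mul_apply]
    refine Finset.sum_congr rfl fun k _ => ?_
    rw [Matrix.star_eq_conjTranspose, Matrix.conjTranspose_apply]
    rfl
  have hEq : EqOn (fun s : ℝ => (((1 + s)⁻¹ : ℝ) : ℂ) * (1 : Matrix (Fin n) (Fin n) ℂ) i j
        - (X + (s:ℂ) • 1)⁻¹ i j)
      (fun s : ℝ => ∑ k, e k * ((((1 + s)⁻¹ - (lam k + s)⁻¹ : ℝ)) : ℂ)) (Ioi 0) := by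
    intro s hs
    have hs' : (0:ℝ) < s := hs
    simp only
    rw [shift_inv hX hs'.le, conj_diag_apply, hone, Finset.mul_sum, ← Finset.sum_sub_distrib]
    refine Finset.sum_congr rfl fun k _ => ?_
    have hk := hX.eigenvalues_pos k
    have hks : (0:ℝ) < lam k + s := by linarith
    rw [show ((lam k : ℂ) + s)⁻¹ = (((lam k + s)⁻¹ : ℝ) : ℂ) by push_cast; ring]
    push_cast
    ring
  have hintk : ∀ k : Fin n, IntegrableOn
      (fun s : ℝ => e k * ((((1 + s)⁻¹ - (lam k + s)⁻¹ : ℝ)) : ℂ)) (Ioi 0) := by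
    intro k
    exact ((log_integral (hX.eigenvalues_pos k)).1.ofReal.const_mul (e k))
  have hintsum : IntegrableOn
      (fun s : ℝ => ∑ k, e k * ((((1 + s)⁻¹ - (lam k + s)⁻¹ : ℝ)) : ℂ)) (Ioi 0) :=
    integrable_finset_sum _ fun k _ => hintk k
  constructor
  · exact hintsum.congr_fun hEq.symm measurableSet_Ioi
  · rw [setIntegral_congr_fun measurableSet_Ioi hEq, integral_finset_sum _ fun k _ => hintk k]
    have : mlog X i j = ∑ k, e k * (Real.log (lam k) : ℂ) := by
      rw [mlog_eq hX, conj_diag_apply]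
      exact Finset.sum_congr rfl fun k _ => by rw [he]; ring
    rw [this]
    refine Finset.sum_congr rfl fun k _ => ?_
    rw [integral_const_mul]
    congr 1
    calc (Real.log (lam k) : ℂ)
        = ((∫ s in Ioi 0, ((1+s)⁻¹ - (lam k + s)⁻¹) : ℝ) : ℂ) := by
          rw [(log_integral (hX.eigenvalues_pos k)).2]
      _ = _ := integral_ofReal.symm


lemma continuousAt_inv_matrix {N : ℝ → Matrix (Fin n) (Fin n) ℂ} {x : ℝ}
    (hc : ContinuousAt N x) (hd : (N x).det ≠ 0) : ContinuousAt (fun s => (N s)⁻¹) x := by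
  have h1 : ContinuousAt Ring.inverse ((N x).det) := by
    rw [Ring.inverse_eq_inv']
    exact continuousAt_inv₀ hd
  exact (continuousAt_matrix_inv _ h1).comp hc

lemma conj_mul_conj {V : Matrix (Fin n) (Fin n) ℂ} (hV : V ∈ Matrix.unitaryGroup (Fin n) ℂ)
    (P Q : Matrix (Fin n) (Fin n) ℂ) :
    (V * P * star V) * (V * Q * star V) = V * (P * Q) * star V := by
  have h2 : star V * V = 1 := Matrix.mem_unitaryGroup_iff'.mp hV
  calc (V * P * star V) * (V * Q * star V) = V * P * ((star V * V) * (Q * star V)) := by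
        simp only [Matrix.mul_assoc]
    _ = V * (P * Q) * star V := by rw [h2, Matrix.one_mul]; simp only [Matrix.mul_assoc]

lemma sum_normSq_pos {x : Fin n → ℂ} (hx : x ≠ 0) : 0 < ∑ k, Complex.normSq (x k) := by
  obtain ⟨k, hk⟩ := Function.ne_iff.mp hx
  exact Finset.sum_pos' (fun k _ => Complex.normSq_nonneg _)
    ⟨k, Finset.mem_univ k, Complex.normSq_pos.mpr hk⟩

end FrechetAux

open FrechetAux


set_option maxHeartbeats 2000000 in
/-- if `U` is unitary, `U* B U = diag (b₁,…,bₙ)` and `U* A U = [c_{ij}]`, then the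
Fréchet derivative of the matrix logarithm at the positive definite `B` in the direction of the
positive definite `A` equals `U [c_{ij} (log bᵢ - log bⱼ)/(bᵢ - bⱼ)] U*`. -/
theorem frechet_log_formula {n : ℕ} (A B : Matrix (Fin n) (Fin n) ℂ)
    (hA : A.PosDef) (hB : B.PosDef) (U : Matrix (Fin n) (Fin n) ℂ)
    (hU : U ∈ Matrix.unitaryGroup (Fin n) ℂ) (b : Fin n → ℝ)
    (hdiag : star U * B * U = Matrix.diagonal (fun i => (b i : ℂ)))
    (C : Matrix (Fin n) (Fin n) ℂ) (hC : C = star U * A * U) :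
    Tendsto (fun t : ℝ => t⁻¹ • (mlog (B + t • A) - mlog B)) (nhdsWithin 0 {0}ᶜ)
      (nhds (U * Matrix.of (fun i j => C i j * (logDD (b i) (b j) : ℂ)) * star U)) := by
  rcases Nat.eq_zero_or_pos n with hn | hn
  · subst hn
    have he : ∀ M N : Matrix (Fin 0) (Fin 0) ℂ, M = N := fun M N => by
      ext i j; exact i.elim0
    rw [he (U * Matrix.of (fun i j => C i j * (logDD (b i) (b j) : ℂ)) * star U)
      (mlog (B + (1:ℝ) • A))]
    exact tendsto_const_nhds.congr fun t => (he _ _)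
  haveI : Nonempty (Fin n) := ⟨⟨0, hn⟩⟩
  -- basic unitary facts
  have hU1 : U * star U = 1 := Matrix.mem_unitaryGroup_iff.mp hU
  have hU2 : star U * U = 1 := Matrix.mem_unitaryGroup_iff'.mp hU
  have hBU : B = U * diagonal (fun k => (b k : ℂ)) * star U := by
    calc B = (U * star U) * B * (U * star U) := by rw [hU1, Matrix.one_mul, Matrix.mul_one]
      _ = U * (star U * B * U) * star U := by simp only [Matrix.mul_assoc]
      _ = _ := by rw [hdiag]
  have hAU : A = U * C * star U := by
    rw [hC]
    calc A = (U * star U) * A * (U * star U) := by rw [hU1, Matrix.one_mul, Matrix.mul_one]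
      _ = U * (star U * A * U) * star U := by simp only [Matrix.mul_assoc]
  -- positivity of the b k
  have hb : ∀ k, 0 < b k := by
    intro k
    set x : Fin n → ℂ := U *ᵥ Pi.single k 1 with hxdef
    have hy : star U *ᵥ x = Pi.single k 1 := by
      rw [hxdef, Matrix.mulVec_mulVec, hU2, Matrix.one_mulVec]
    have hx0 : x ≠ 0 := by
      intro h0
      rw [h0, Matrix.mulVec_zero] at hy
      have := congrFun hy k
      simp [Pi.single_eq_same] at this
    have hpos := hB.dotProduct_mulVec_pos hx0
    rw [hBU, form_conj, hy] at hpos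
    have hsum : (∑ l, ((b l : ℂ)) * ((Complex.normSq ((Pi.single k 1 : Fin n → ℂ) l) : ℝ) : ℂ)) = (b k : ℂ) := by
      rw [Finset.sum_eq_single k]
      · simp
      · intro l _ hl
        simp [Pi.single_eq_of_ne hl]
      · intro h; exact absurd (Finset.mem_univ k) h
    rw [hsum] at hpos
    exact_mod_cast (Complex.pos_iff.mp hpos).1
  -- δ : uniform lower bound on eigenvalues of B
  set δ : ℝ := Finset.univ.inf' Finset.univ_nonempty b with hδdef
  have hδpos : 0 < δ := by
    rw [hδdef, Finset.lt_inf'_iff]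
    exact fun k _ => hb k
  have hδle : ∀ k, δ ≤ b k := fun k => Finset.inf'_le _ (Finset.mem_univ k)
  -- quadratic form lower bound for B
  have formB : ∀ x : Fin n → ℂ, δ * ∑ k, Complex.normSq (x k) ≤ (star x ⬝ᵥ B *ᵥ x).re := by
    intro x
    conv_rhs => rw [hBU, form_conj]
    set y := star U *ᵥ x with hy
    have hre : (∑ k, ((b k : ℂ)) * ((Complex.normSq (y k) : ℝ) : ℂ)).re
        = ∑ k, b k * Complex.normSq (y k) := by
      rw [Complex.re_sum]
      refine Finset.sum_congr rfl fun k _ => ?_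
      rw [← Complex.ofReal_mul, Complex.ofReal_re]
    rw [hre]
    calc δ * ∑ k, Complex.normSq (x k) = δ * ∑ k, Complex.normSq (y k) := by
          rw [hy, sum_normSq_conj hU x]
      _ = ∑ k, δ * Complex.normSq (y k) := Finset.mul_sum _ _ _
      _ ≤ ∑ k, b k * Complex.normSq (y k) := Finset.sum_le_sum fun k _ =>
          mul_le_mul_of_nonneg_right (hδle k) (Complex.normSq_nonneg _)
  -- bound on the quadratic form of A
  set K : ℝ := ∑ k, ∑ l, ‖A k l‖ with hKdef
  have hK0 : 0 ≤ K := Finset.sum_nonneg fun k _ => Finset.sum_nonneg fun l _ =>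
    (norm_nonneg _)
  have formA : ∀ x : Fin n → ℂ,
      ‖star x ⬝ᵥ A *ᵥ x‖ ≤ K * ∑ k, Complex.normSq (x k) := by
    intro x
    set S := ∑ k, Complex.normSq (x k) with hSdef
    have hS0 : 0 ≤ S := Finset.sum_nonneg fun k _ => Complex.normSq_nonneg _
    have hxb : ∀ k, ‖x k‖ ≤ Real.sqrt S := by
      intro k
      rw [Complex.norm_def]
      exact Real.sqrt_le_sqrt (Finset.single_le_sum
        (fun k _ => Complex.normSq_nonneg _) (Finset.mem_univ k))
    have hexp : star x ⬝ᵥ A *ᵥ x = ∑ k, ∑ l, (starRingEnd ℂ) (x k) * (A k l * x l) := by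
      simp only [dotProduct, Matrix.mulVec, Pi.star_apply, Finset.mul_sum, Complex.star_def]
    rw [hexp]
    calc ‖∑ k, ∑ l, (starRingEnd ℂ) (x k) * (A k l * x l)‖
        ≤ ∑ k, ∑ l, ‖(starRingEnd ℂ) (x k) * (A k l * x l)‖ := by
          refine (norm_sum_le _ _).trans (Finset.sum_le_sum fun k _ => ?_)
          exact norm_sum_le _ _
      _ ≤ ∑ k, ∑ l, ‖A k l‖ * S := by
          refine Finset.sum_le_sum fun k _ => Finset.sum_le_sum fun l _ => ?_
          rw [norm_mul, norm_mul, Complex.norm_conj]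
          calc ‖x k‖ * (‖A k l‖ * ‖x l‖)
              = ‖A k l‖ * (‖x k‖ * ‖x l‖) := by ring
            _ ≤ ‖A k l‖ * S := by
                refine mul_le_mul_of_nonneg_left ?_ (norm_nonneg _)
                calc ‖x k‖ * ‖x l‖
                    ≤ Real.sqrt S * Real.sqrt S :=
                      mul_le_mul (hxb k) (hxb l) (norm_nonneg _) (Real.sqrt_nonneg _)
                  _ = S := Real.mul_self_sqrt hS0
      _ = K * S := by rw [hKdef, Finset.sum_mul]; exact Finset.sum_congr rfl fun k _ => by rw [Finset.sum_mul]
  -- the shifted matrices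
  set M : ℝ → ℝ → Matrix (Fin n) (Fin n) ℂ :=
    fun t s => B + (t:ℂ) • A + (s:ℂ) • 1 with hMdef
  set t₀ : ℝ := δ / (2 * (K + 1)) with ht₀def
  have ht₀pos : 0 < t₀ := by positivity
  -- quadratic form bound for the M t s
  have formM : ∀ t : ℝ, |t| ≤ t₀ → ∀ s : ℝ, 0 ≤ s → ∀ x : Fin n → ℂ,
      (δ/2 + s) * ∑ k, Complex.normSq (x k) ≤ (star x ⬝ᵥ (M t s) *ᵥ x).re := by
    intro t ht s hs x
    set S := ∑ k, Complex.normSq (x k) with hSdef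
    have hS0 : 0 ≤ S := Finset.sum_nonneg fun k _ => Complex.normSq_nonneg _
    have hsplit : star x ⬝ᵥ (M t s) *ᵥ x
        = star x ⬝ᵥ B *ᵥ x + (t:ℂ) * (star x ⬝ᵥ A *ᵥ x) + (s:ℂ) * ((S:ℝ):ℂ) := by
      rw [hMdef]
      simp only [Matrix.add_mulVec, Matrix.smul_mulVec, Matrix.one_mulVec,
        dotProduct_add, dotProduct_smul, smul_eq_mul, star_dot_self]
      rfl
    have hre : (star x ⬝ᵥ (M t s) *ᵥ x).re
        = (star x ⬝ᵥ B *ᵥ x).re + t * (star x ⬝ᵥ A *ᵥ x).re + s * S := by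
      rw [hsplit]
      simp [Complex.add_re, Complex.mul_re]
    rw [hre]
    have h1 : δ * S ≤ (star x ⬝ᵥ B *ᵥ x).re := formB x
    have h2 : |t * (star x ⬝ᵥ A *ᵥ x).re| ≤ (δ/2) * S := by
      rw [abs_mul]
      have h3 : |(star x ⬝ᵥ A *ᵥ x).re| ≤ K * S :=
        (Complex.abs_re_le_norm _).trans (formA x)
      have h4 : |t| * |(star x ⬝ᵥ A *ᵥ x).re| ≤ t₀ * (K * S) :=
        mul_le_mul ht h3 (abs_nonneg _) ht₀pos.le
      refine h4.trans ?_
      rw [ht₀def]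
      rw [div_mul_eq_mul_div, div_le_iff₀ (by positivity)]
      nlinarith
    nlinarith [abs_le.mp h2]
  -- hermitian
  have hherm : ∀ t s : ℝ, (M t s).IsHermitian := by
    intro t s
    have h1 : ((t:ℂ) • A).IsHermitian := by
      rw [Matrix.IsHermitian, Matrix.conjTranspose_smul, hA.1.eq, Complex.star_def,
        Complex.conj_ofReal]
    have h2 : ((s:ℂ) • (1 : Matrix (Fin n) (Fin n) ℂ)).IsHermitian := by
      rw [Matrix.IsHermitian, Matrix.conjTranspose_smul, Matrix.conjTranspose_one,
        Complex.star_def, Complex.conj_ofReal]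
    exact (hB.1.add h1).add h2
  -- positive definiteness
  have hPD : ∀ t : ℝ, |t| ≤ t₀ → ∀ s : ℝ, 0 ≤ s → (M t s).PosDef := by
    intro t ht s hs
    refine Matrix.PosDef.of_dotProduct_mulVec_pos (hherm t s) fun x hx => ?_
    rw [Complex.pos_iff]
    constructor
    · refine lt_of_lt_of_le ?_ (formM t ht s hs x)
      have := sum_normSq_pos hx
      have : 0 < δ/2 + s := by linarith
      positivity
    · exact (im_form_eq_zero (hherm t s) x).symm
  -- determinant and inverse-entry bounds
  have hbnd : ∀ t : ℝ, |t| ≤ t₀ → ∀ s : ℝ, 0 ≤ s →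
      IsUnit (M t s).det ∧ ∀ i j, ‖(M t s)⁻¹ i j‖ ≤ (δ/2 + s)⁻¹ :=
    fun t ht s hs => inv_entry_bound (by linarith) (formM t ht s hs)
  have hM0 : ∀ s : ℝ, M 0 s = B + (s:ℂ) • 1 := by
    intro s
    rw [hMdef]
    simp
  have hshift : ∀ s : ℝ, B + (s:ℂ) • 1 = U * diagonal (fun k => (b k : ℂ) + s) * star U := by
    intro s
    have hd : diagonal (fun _ : Fin n => (s:ℂ)) = (s:ℂ) • (1 : Matrix (Fin n) (Fin n) ℂ) := by
      ext k l
      by_cases h : k = l <;> simp [Matrix.diagonal_apply, Matrix.smul_apply, Matrix.one_apply, h]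
    have h1 : (s:ℂ) • (1 : Matrix (Fin n) (Fin n) ℂ)
        = U * diagonal (fun _ : Fin n => (s:ℂ)) * star U := by
      rw [hd, Matrix.mul_smul, Matrix.mul_one, Matrix.smul_mul, hU1]
    conv_lhs => rw [hBU, h1]
    rw [← Matrix.add_mul, ← Matrix.mul_add, Matrix.diagonal_add]
  have hbs : ∀ s : ℝ, 0 ≤ s → ∀ k, ((b k : ℂ) + s) ≠ 0 := by
    intro s hs k
    have h : (0:ℝ) < b k + s := by have := hb k; linarith
    rw [show ((b k : ℂ) + s) = ((b k + s : ℝ) : ℂ) by push_cast; ring]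
    exact_mod_cast h.ne'
  have hBinv : ∀ s : ℝ, 0 ≤ s →
      (B + (s:ℂ) • 1)⁻¹ = U * diagonal (fun k => ((b k : ℂ) + s)⁻¹) * star U := by
    intro s hs
    rw [hshift s]
    exact conj_diag_inv hU (hbs s hs)
  apply tendsto_pi_nhds.mpr
  intro i
  rw [tendsto_pi_nhds]
  intro j
  set Fn : ℝ → ℝ → ℂ := fun t s => ((B + (s:ℂ) • 1)⁻¹ * A * (B + (t:ℂ) • A + (s:ℂ) • 1)⁻¹) i j with hFndef
  have hFn0 : ∀ s : ℝ, 0 < s → Fn 0 s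
      = ∑ k, ∑ l, (U i k * C k l * (starRingEnd ℂ) (U j l))
          * ((((b k + s) * (b l + s))⁻¹ : ℝ) : ℂ) := by
    intro s hs
    rw [hFndef]
    simp only [Complex.ofReal_zero, zero_smul, add_zero]
    rw [hBinv s hs.le]
    conv_lhs => rw [hAU]
    rw [conj_mul_conj hU, conj_mul_conj hU, triple_apply]
    refine Finset.sum_congr rfl fun k _ => Finset.sum_congr rfl fun l _ => ?_
    rw [Matrix.star_eq_conjTranspose, Matrix.conjTranspose_apply]
    rw [show (diagonal (fun k => ((b k : ℂ) + s)⁻¹) * C * diagonal (fun k => ((b k : ℂ) + s)⁻¹)) k l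
        = ((b k : ℂ) + s)⁻¹ * C k l * ((b l : ℂ) + s)⁻¹ by
      rw [Matrix.mul_diagonal, Matrix.diagonal_mul]]
    have e1 : ((b k:ℂ)+s)⁻¹ = (((b k + s)⁻¹ : ℝ) : ℂ) := by push_cast; ring
    have e2 : ((b l:ℂ)+s)⁻¹ = (((b l + s)⁻¹ : ℝ) : ℂ) := by push_cast; ring
    rw [e1, e2, show (((b k + s) * (b l + s))⁻¹ : ℝ) = ((b k + s)⁻¹ * (b l + s)⁻¹ : ℝ) by
      rw [mul_inv], RCLike.star_def]
    push_cast
    ring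
  have hbsum : ∀ k l : Fin n, IntegrableOn (fun s : ℝ => (U i k * C k l * (starRingEnd ℂ) (U j l))
      * ((((b k + s) * (b l + s))⁻¹ : ℝ) : ℂ)) (Ioi 0) :=
    fun k l => ((logDD_integral (hb k) (hb l)).1.ofReal.const_mul _)
  have htarget : (U * Matrix.of (fun i j => C i j * (logDD (b i) (b j) : ℂ)) * star U) i j
      = ∫ s in Ioi 0, Fn 0 s := by
    rw [setIntegral_congr_fun measurableSet_Ioi (fun s hs => hFn0 s hs)]
    rw [integral_finset_sum _ (fun k _ => integrable_finset_sum _ fun l _ => hbsum k l)]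
    rw [triple_apply]
    refine Finset.sum_congr rfl fun k _ => ?_
    rw [integral_finset_sum _ (fun l _ => hbsum k l)]
    refine Finset.sum_congr rfl fun l _ => ?_
    rw [integral_const_mul]
    have : ∫ s in Ioi (0:ℝ), ((((b k + s) * (b l + s))⁻¹ : ℝ) : ℂ)
        = ((logDD (b k) (b l) : ℝ) : ℂ) := by
      rw [show (∫ s in Ioi (0:ℝ), ((((b k + s) * (b l + s))⁻¹ : ℝ) : ℂ))
          = ((∫ s in Ioi (0:ℝ), ((b k + s) * (b l + s))⁻¹ : ℝ) : ℂ) from integral_ofReal,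
        (logDD_integral (hb k) (hb l)).2]
    rw [this, Matrix.star_eq_conjTranspose, Matrix.conjTranspose_apply, Matrix.of_apply,
      RCLike.star_def]
    ring
  -- explicit-form consequences of hbnd
  have hbnd' : ∀ t : ℝ, |t| ≤ t₀ → ∀ s : ℝ, 0 ≤ s →
      IsUnit (B + (t:ℂ) • A + (s:ℂ) • 1).det ∧
        ∀ i j, ‖(B + (t:ℂ) • A + (s:ℂ) • 1)⁻¹ i j‖ ≤ (δ/2 + s)⁻¹ := by
    intro t ht s hs
    have h := hbnd t ht s hs
    simpa only [hMdef] using h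
  have hbnd0 : ∀ s : ℝ, 0 ≤ s → IsUnit (B + (s:ℂ) • 1).det ∧
      ∀ i j, ‖(B + (s:ℂ) • 1)⁻¹ i j‖ ≤ (δ/2 + s)⁻¹ := by
    intro s hs
    have h := hbnd 0 (by rw [abs_zero]; exact ht₀pos.le) s hs
    simp only [hMdef, Complex.ofReal_zero, zero_smul, add_zero] at h
    exact h
  have hXt : ∀ t : ℝ, |t| ≤ t₀ → (B + (t:ℂ) • A).PosDef := by
    intro t ht
    have h := hPD t ht 0 le_rfl
    simp only [hMdef, Complex.ofReal_zero, zero_smul, add_zero] at h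
    exact h
  have hIoo : Ioo (-t₀) t₀ ∈ 𝓝 (0:ℝ) := Ioo_mem_nhds (by linarith) ht₀pos
  have hsmul : ∀ t : ℝ, t • A = (t:ℂ) • A := by
    intro t
    ext k l
    simp [Matrix.smul_apply, Complex.real_smul, smul_eq_mul]
  -- eventual equality of difference quotient with the resolvent integral
  have hev : ∀ᶠ t in nhdsWithin (0:ℝ) {0}ᶜ,
      (t⁻¹ • (mlog (B + t • A) - mlog B)) i j = ∫ s in Ioi 0, Fn t s := by
    filter_upwards [nhdsWithin_le_nhds hIoo, self_mem_nhdsWithin] with t htI htne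
    have htne' : (t:ℂ) ≠ 0 := by
      simpa using (Set.mem_compl_singleton_iff.mp htne)
    have ht : |t| ≤ t₀ := abs_le.mpr ⟨htI.1.le, htI.2.le⟩
    have hXtp := hXt t ht
    rw [hsmul t]
    have h1 := mlog_apply hXtp i j
    have h2 := mlog_apply hB i j
    have hentry : ((t⁻¹ • (mlog (B + (t:ℂ) • A) - mlog B)) i j)
        = ((t:ℂ))⁻¹ * (mlog (B + (t:ℂ) • A) i j - mlog B i j) := by
      simp [Matrix.smul_apply, Matrix.sub_apply, Complex.real_smul, Complex.ofReal_inv]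
    rw [hentry, h1.2, h2.2, ← integral_sub h1.1 h2.1]
    have hEq : EqOn (fun s : ℝ =>
          ((((1 + s)⁻¹ : ℝ) : ℂ) * (1 : Matrix (Fin n) (Fin n) ℂ) i j
            - (B + (t:ℂ) • A + (s:ℂ) • 1)⁻¹ i j)
          - ((((1 + s)⁻¹ : ℝ) : ℂ) * (1 : Matrix (Fin n) (Fin n) ℂ) i j
            - (B + (s:ℂ) • 1)⁻¹ i j))
        (fun s => (t:ℂ) * Fn t s) (Ioi 0) := by
      intro s hs
      have hs' : (0:ℝ) < s := hs
      simp only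
      have hres := inv_sub_inv' (hbnd0 s hs'.le).1 (hbnd' t ht s hs'.le).1
      have hdiff : (B + (t:ℂ) • A + (s:ℂ) • 1) - (B + (s:ℂ) • 1) = (t:ℂ) • A := by
        ext k l
        simp [Matrix.sub_apply, Matrix.add_apply, Matrix.smul_apply]
      rw [hdiff] at hres
      calc (↑((1 + s)⁻¹:ℝ) * (1 : Matrix (Fin n) (Fin n) ℂ) i j
              - (B + (t:ℂ) • A + (s:ℂ) • 1)⁻¹ i j)
            - (↑((1 + s)⁻¹:ℝ) * (1 : Matrix (Fin n) (Fin n) ℂ) i j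
              - (B + (s:ℂ) • 1)⁻¹ i j)
          = ((B + (s:ℂ) • 1)⁻¹ - (B + (t:ℂ) • A + (s:ℂ) • 1)⁻¹) i j := by
            rw [Matrix.sub_apply]; ring
        _ = ((B + (s:ℂ) • 1)⁻¹ * ((t:ℂ) • A) * (B + (t:ℂ) • A + (s:ℂ) • 1)⁻¹) i j := by
            rw [hres]
        _ = (t:ℂ) * Fn t s := by
            rw [hFndef]
            simp only
            rw [Matrix.mul_smul, Matrix.smul_mul, Matrix.smul_apply, smul_eq_mul]
    rw [setIntegral_congr_fun measurableSet_Ioi hEq, integral_const_mul,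
      inv_mul_cancel_left₀ htne']
  -- measurability
  have hmeas : ∀ t : ℝ, |t| ≤ t₀ → AEStronglyMeasurable (fun s => Fn t s)
      (volume.restrict (Ioi 0)) := by
    intro t ht
    apply ContinuousOn.aestronglyMeasurable _ measurableSet_Ioi
    intro s hs
    have hs' : (0:ℝ) < s := hs
    have hcP : ContinuousAt (fun s : ℝ => (B + (s:ℂ) • 1)⁻¹) s := by
      apply continuousAt_inv_matrix
      · exact (continuous_const.add (Complex.continuous_ofReal.smul continuous_const)).continuousAt
      · exact isUnit_iff_ne_zero.mp (hbnd0 s hs'.le).1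
    have hcQ : ContinuousAt (fun s : ℝ => (B + (t:ℂ) • A + (s:ℂ) • 1)⁻¹) s := by
      apply continuousAt_inv_matrix
      · exact (continuous_const.add (Complex.continuous_ofReal.smul continuous_const)).continuousAt
      · exact isUnit_iff_ne_zero.mp (hbnd' t ht s hs'.le).1
    have hca : ContinuousAt (fun s : ℝ =>
        (B + (s:ℂ) • 1)⁻¹ * A * (B + (t:ℂ) • A + (s:ℂ) • 1)⁻¹) s :=
      (hcP.mul continuousAt_const).mul hcQ
    exact ((continuous_apply j).continuousAt.comp
      ((continuous_apply i).continuousAt.comp hca)).continuousWithinAt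
  -- the uniform bound
  set bound : ℝ → ℝ := fun s => K * ((δ/2 + s) * (δ/2 + s))⁻¹ with hbdef
  have hbound_int : Integrable bound (volume.restrict (Ioi 0)) :=
    ((logDD_integral (by linarith : (0:ℝ) < δ/2) (by linarith)).1.const_mul K)
  have habs : ∀ t : ℝ, |t| ≤ t₀ → ∀ s : ℝ, 0 < s → ‖Fn t s‖ ≤ bound s := by
    intro t ht s hs
    have hP := (hbnd0 s hs.le).2
    have hQ := (hbnd' t ht s hs.le).2
    have h2 : (0:ℝ) < δ/2 + s := by linarith
    rw [hFndef]
    simp only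
    rw [triple_apply]
    calc ‖∑ k, ∑ l,
          (B + (s:ℂ) • 1)⁻¹ i k * A k l * (B + (t:ℂ) • A + (s:ℂ) • 1)⁻¹ l j‖
        ≤ ∑ k, ∑ l, ‖
            (B + (s:ℂ) • 1)⁻¹ i k * A k l * (B + (t:ℂ) • A + (s:ℂ) • 1)⁻¹ l j‖ :=
          (norm_sum_le _ _).trans (Finset.sum_le_sum fun k _ => norm_sum_le _ _)
      _ ≤ ∑ k, ∑ l, ‖A k l‖ * ((δ/2 + s) * (δ/2 + s))⁻¹ := by
          refine Finset.sum_le_sum fun k _ => Finset.sum_le_sum fun l _ => ?_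
          rw [norm_mul, norm_mul,
            show (((δ/2+s)*(δ/2+s))⁻¹ : ℝ) = (δ/2+s)⁻¹ * (δ/2+s)⁻¹ by rw [mul_inv]]
          calc ‖(B + (s:ℂ) • 1)⁻¹ i k‖ * ‖A k l‖
                * ‖(B + (t:ℂ) • A + (s:ℂ) • 1)⁻¹ l j‖
              ≤ (δ/2+s)⁻¹ * ‖A k l‖ * (δ/2+s)⁻¹ := by
                have e1 := hP i k
                have e2 := hQ l j
                gcongr
            _ = ‖A k l‖ * ((δ/2+s)⁻¹ * (δ/2+s)⁻¹) := by ring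
      _ = bound s := by
          rw [hbdef]
          simp only
          rw [hKdef, Finset.sum_mul]
          exact Finset.sum_congr rfl fun k _ => by rw [Finset.sum_mul]
  -- pointwise convergence
  have hlim : ∀ᵐ s ∂(volume.restrict (Ioi (0:ℝ))),
      Tendsto (fun t => Fn t s) (nhdsWithin 0 {0}ᶜ) (𝓝 (Fn 0 s)) := by
    filter_upwards [ae_restrict_mem measurableSet_Ioi] with s hs
    have hs' : (0:ℝ) < s := hs
    have hcQ : ContinuousAt (fun t : ℝ => (B + (t:ℂ) • A + (s:ℂ) • 1)⁻¹) 0 := by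
      apply continuousAt_inv_matrix
      · exact ((continuous_const.add
          (Complex.continuous_ofReal.smul continuous_const)).add continuous_const).continuousAt
      · have h := (hbnd' 0 (by rw [abs_zero]; exact ht₀pos.le) s hs'.le).1
        simp only [Complex.ofReal_zero, zero_smul, add_zero] at h ⊢
        exact isUnit_iff_ne_zero.mp h
    have hct : ContinuousAt (fun t : ℝ => Fn t s) 0 := by
      rw [hFndef]
      exact (continuous_apply j).continuousAt.comp
        ((continuous_apply i).continuousAt.comp (continuousAt_const.mul hcQ))
    exact hct.tendsto.mono_left nhdsWithin_le_nhds
  -- conclude via dominated convergence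
  rw [htarget]
  have hdct := tendsto_integral_filter_of_dominated_convergence (μ := volume.restrict (Ioi 0))
    (l := nhdsWithin (0:ℝ) {0}ᶜ) (F := fun t s => Fn t s) (f := fun s => Fn 0 s) bound
    (by
      filter_upwards [nhdsWithin_le_nhds hIoo] with t htI
      exact hmeas t (abs_le.mpr ⟨htI.1.le, htI.2.le⟩))
    (by
      filter_upwards [nhdsWithin_le_nhds hIoo] with t htI
      filter_upwards [ae_restrict_mem measurableSet_Ioi] with s hs
      exact habs t (abs_le.mpr ⟨htI.1.le, htI.2.le⟩) s hs)
    hbound_int hlim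
  exact hdct.congr' (hev.mono fun t ht => ht.symm)
end

section
/- For a positive definite Hermitian matrix B and Hermitian matrix A, one has tr(B · Dlog[B](A)) = tr(A), and Dlog[B](B) = I_n. -/
open Matrix Filter
open scoped ComplexOrder

-- trace of conjugated diagonals
lemma trace_conj_pair {n : ℕ} (U V : Matrix.unitaryGroup (Fin n) ℂ) (d e : Fin n → ℝ) :
    ((U : Matrix (Fin n) (Fin n) ℂ) * diagonal (fun i => (d i : ℂ)) * star (U : Matrix (Fin n) (Fin n) ℂ) *
      ((V : Matrix (Fin n) (Fin n) ℂ) * diagonal (fun i => (e i : ℂ)) * star (V : Matrix (Fin n) (Fin n) ℂ))).trace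
    = ((∑ i, ∑ j, d i * e j *
        Complex.normSq ((star (U : Matrix (Fin n) (Fin n) ℂ) * (V : Matrix (Fin n) (Fin n) ℂ)) i j) : ℝ) : ℂ) := by
  set U' := (U : Matrix (Fin n) (Fin n) ℂ)
  set V' := (V : Matrix (Fin n) (Fin n) ℂ)
  set W := star U' * V' with hW
  set Dd : Matrix (Fin n) (Fin n) ℂ := diagonal (fun i => (d i : ℂ)) with hDd
  set De : Matrix (Fin n) (Fin n) ℂ := diagonal (fun i => (e i : ℂ)) with hDe
  have h1 : (U' * Dd * star U' * (V' * De * star V')).trace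
      = (Dd * (W * De * star W)).trace := by
    have hUU : U' * star U' = 1 := (Matrix.mem_unitaryGroup_iff).mp U.2
    have e1 : U' * Dd * star U' * (V' * De * star V')
        = U' * (Dd * (W * De * (star V' * U'))) * star U' := by
      simp only [hW, Matrix.star_mul, star_star, Matrix.mul_assoc, hUU, Matrix.mul_one]
    rw [e1, Matrix.trace_mul_cycle, ← Matrix.mul_assoc,
      Matrix.UnitaryGroup.star_mul_self U, Matrix.one_mul]
    congr 1
    simp only [hW, Matrix.star_mul, star_star, Matrix.mul_assoc]
  rw [h1]
  have h2 : ∀ i, (W * De * star W) i i = ∑ j, (e j : ℂ) * ((W i j) * star (W i j)) := by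
    intro i
    rw [Matrix.mul_apply]
    congr 1; ext j
    rw [Matrix.mul_diagonal]
    rw [Matrix.star_apply]
    ring
  have h3 : (Dd * (W * De * star W)).trace = ∑ i, (d i : ℂ) * (W * De * star W) i i := by
    simp [Matrix.trace, Matrix.diag, hDd, Matrix.diagonal_mul]
  rw [h3]
  push_cast
  congr 1; ext i
  rw [h2, Finset.mul_sum]
  congr 1; ext j
  rw [Complex.star_def, Complex.mul_conj]
  push_cast
  ring

lemma sum_normSq_row {n : ℕ} {M : Matrix (Fin n) (Fin n) ℂ}
    (hM : M ∈ Matrix.unitaryGroup (Fin n) ℂ) (i : Fin n) :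
    ∑ j, Complex.normSq (M i j) = 1 := by
  have h := Matrix.mem_unitaryGroup_iff.mp hM
  have h2 := congrFun (congrFun h i) i
  rw [Matrix.mul_apply] at h2
  simp only [Matrix.star_apply, Complex.star_def, Complex.mul_conj] at h2
  rw [Matrix.one_apply_eq] at h2
  exact_mod_cast h2
lemma sum_normSq_col {n : ℕ} {M : Matrix (Fin n) (Fin n) ℂ}
    (hM : M ∈ Matrix.unitaryGroup (Fin n) ℂ) (j : Fin n) :
    ∑ i, Complex.normSq (M i j) = 1 := by
  have h := Matrix.mem_unitaryGroup_iff'.mp hM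
  have h2 := congrFun (congrFun h j) j
  rw [Matrix.mul_apply] at h2
  simp only [Matrix.star_apply, Complex.star_def] at h2
  rw [Matrix.one_apply_eq] at h2
  have : ∀ k, (starRingEnd ℂ) (M k j) * M k j = (Complex.normSq (M k j) : ℂ) := by
    intro k; rw [mul_comm, Complex.mul_conj]
  rw [Finset.sum_congr rfl (fun k _ => this k)] at h2
  exact_mod_cast h2

lemma star_mul_mem_unitary {n : ℕ} (U V : Matrix.unitaryGroup (Fin n) ℂ) :
    star (U : Matrix (Fin n) (Fin n) ℂ) * (V : Matrix (Fin n) (Fin n) ℂ)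
      ∈ Matrix.unitaryGroup (Fin n) ℂ := by
  rw [Matrix.mem_unitaryGroup_iff]
  calc star (U:Matrix (Fin n) (Fin n) ℂ) * V.1 * star (star (U:Matrix (Fin n) (Fin n) ℂ) * V.1)
      = star (U:Matrix (Fin n) (Fin n) ℂ) * (V.1 * star V.1) * U.1 := by
        simp only [Matrix.star_mul, star_star, Matrix.mul_assoc]
    _ = 1 := by
        rw [Matrix.mem_unitaryGroup_iff.mp V.2, Matrix.mul_one,
          Matrix.UnitaryGroup.star_mul_self U]

lemma mlog_eq {n : ℕ} {X : Matrix (Fin n) (Fin n) ℂ} (hX : X.IsHermitian) :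
    mlog X = (hX.eigenvectorUnitary : Matrix (Fin n) (Fin n) ℂ)
      * diagonal (fun i => ((Real.log (hX.eigenvalues i) : ℝ) : ℂ))
      * star (hX.eigenvectorUnitary : Matrix (Fin n) (Fin n) ℂ) := by
  rw [mlog, hX.cfc_eq, Matrix.IsHermitian.cfc]
  rfl

lemma mlog_isHermitian {n : ℕ} {X : Matrix (Fin n) (Fin n) ℂ} (hX : X.IsHermitian) :
    (mlog X).IsHermitian := by
  have : IsSelfAdjoint (mlog X) := cfc_predicate Real.log X
  exact this

lemma scalar_klein {x y : ℝ} (hx : 0 < x) (hy : 0 < y) :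
    0 ≤ x * Real.log x - x * Real.log y - x + y := by
  have h1 : Real.log (y / x) ≤ y / x - 1 := Real.log_le_sub_one_of_pos (div_pos hy hx)
  rw [Real.log_div hy.ne' hx.ne'] at h1
  have h2 : x * (y / x) = y := by field_simp
  nlinarith [mul_le_mul_of_nonneg_left h1 hx.le]

lemma klein {n : ℕ} {X Y : Matrix (Fin n) (Fin n) ℂ} (hX : X.PosDef) (hY : Y.PosDef) :
    (X.trace - Y.trace).re ≤ ((X * (mlog X - mlog Y)).trace).re := by
  have hXh := hX.1
  have hYh := hY.1
  set U := hXh.eigenvectorUnitary with hU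
  set V := hYh.eigenvectorUnitary with hV
  set lam := hXh.eigenvalues with hlam
  set mu := hYh.eigenvalues with hmu
  set U' := (U : Matrix (Fin n) (Fin n) ℂ)
  set V' := (V : Matrix (Fin n) (Fin n) ℂ)
  set c : Fin n → Fin n → ℝ := fun i j => Complex.normSq ((star U' * V') i j) with hc
  have hXspec : X = U' * diagonal (fun i => ((lam i : ℝ) : ℂ)) * star U' :=
    hXh.spectral_theorem
  have hYspec : Y = V' * diagonal (fun i => ((mu i : ℝ) : ℂ)) * star V' :=
    hYh.spectral_theorem
  -- the four traces
  have tXX : (X * mlog X).trace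
      = ((∑ i, ∑ j, lam i * Real.log (lam j)
          * Complex.normSq ((star U' * U') i j) : ℝ) : ℂ) := by
    have h := trace_conj_pair U U lam (fun i => Real.log (lam i))
    rw [← hXspec, ← mlog_eq hXh] at h
    exact h
  have hUU : star U' * U' = 1 := Matrix.UnitaryGroup.star_mul_self U
  have tXX' : (X * mlog X).trace = ((∑ i, lam i * Real.log (lam i) : ℝ) : ℂ) := by
    rw [tXX, hUU]
    norm_num [Matrix.one_apply, apply_ite Complex.normSq, mul_ite, Finset.sum_ite_eq]
  have tXY : (X * mlog Y).trace
      = ((∑ i, ∑ j, lam i * Real.log (mu j) * c i j : ℝ) : ℂ) := by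
    have h := trace_conj_pair U V lam (fun i => Real.log (mu i))
    rw [← hXspec, ← mlog_eq hYh] at h
    exact h
  have hd1 : (V' * diagonal (fun _ : Fin n => ((1:ℝ) : ℂ)) * star V') = 1 := by
    have : diagonal (fun _ : Fin n => ((1:ℝ) : ℂ)) = 1 := by
      norm_num
    rw [this, Matrix.mul_one, Matrix.mem_unitaryGroup_iff.mp V.2]
  have tX : X.trace = ((∑ i, ∑ j, lam i * 1 * c i j : ℝ) : ℂ) := by
    have h := trace_conj_pair U V lam (fun _ => 1)
    rw [hd1, Matrix.mul_one, ← hXspec] at h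
    exact h
  have hd1' : (U' * diagonal (fun _ : Fin n => ((1:ℝ) : ℂ)) * star U') = 1 := by
    have : diagonal (fun _ : Fin n => ((1:ℝ) : ℂ)) = 1 := by norm_num
    rw [this, Matrix.mul_one, Matrix.mem_unitaryGroup_iff.mp U.2]
  have tY : Y.trace = ((∑ i, ∑ j, 1 * mu j * c i j : ℝ) : ℂ) := by
    have h := trace_conj_pair U V (fun _ => 1) mu
    rw [hd1', Matrix.one_mul, ← hYspec] at h
    exact h
  -- row sums
  have hrow : ∀ i, ∑ j, c i j = 1 := fun i => sum_normSq_row (star_mul_mem_unitary U V) i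
  have tXXrow : (∑ i, lam i * Real.log (lam i) : ℝ)
      = ∑ i, ∑ j, lam i * Real.log (lam i) * c i j := by
    congr 1; ext i
    rw [← Finset.mul_sum, hrow i, mul_one]
  -- assemble
  have hsplit : (X * (mlog X - mlog Y)).trace = (X * mlog X).trace - (X * mlog Y).trace := by
    rw [Matrix.mul_sub, Matrix.trace_sub]
  rw [hsplit, tXX', tX, tY, tXY]
  rw [Complex.sub_re, Complex.sub_re]
  simp only [Complex.ofReal_re]
  rw [tXXrow]
  have key : 0 ≤ ∑ i, ∑ j, c i j *
      (lam i * Real.log (lam i) - lam i * Real.log (mu j) - lam i + mu j) := by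
    apply Finset.sum_nonneg; intro i _
    apply Finset.sum_nonneg; intro j _
    exact mul_nonneg (Complex.normSq_nonneg _)
      (scalar_klein (hX.eigenvalues_pos i) (hY.eigenvalues_pos j))
  have expand : (∑ i, ∑ j, c i j *
      (lam i * Real.log (lam i) - lam i * Real.log (mu j) - lam i + mu j))
      = (∑ i, ∑ j, lam i * Real.log (lam i) * c i j)
        - (∑ i, ∑ j, lam i * Real.log (mu j) * c i j)
        - (∑ i, ∑ j, lam i * 1 * c i j)
        + (∑ i, ∑ j, 1 * mu j * c i j) := by
    simp only [← Finset.sum_sub_distrib, ← Finset.sum_add_distrib]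
    congr 1; ext i; congr 1; ext j; ring
  rw [expand] at key
  linarith

-- conjugation helper
lemma conj_diag_smul {n : ℕ} (U : Matrix.unitaryGroup (Fin n) ℂ) (r : ℝ) :
    (U : Matrix (Fin n) (Fin n) ℂ) * diagonal (fun _ : Fin n => ((r:ℝ):ℂ))
      * star (U : Matrix (Fin n) (Fin n) ℂ) = (r:ℂ) • 1 := by
  have : diagonal (fun _ : Fin n => ((r:ℝ):ℂ)) = (r:ℂ) • 1 := by
    rw [Matrix.smul_one_eq_diagonal]
  rw [this, Matrix.mul_smul, Matrix.smul_mul, Matrix.mul_one,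
    Matrix.mem_unitaryGroup_iff.mp U.2]

lemma posSemidef_conj {n : ℕ} (U : Matrix.unitaryGroup (Fin n) ℂ) {d : Fin n → ℝ}
    (hd : ∀ i, 0 ≤ d i) :
    (((U : Matrix (Fin n) (Fin n) ℂ) * diagonal (fun i => ((d i : ℝ):ℂ))
      * star (U : Matrix (Fin n) (Fin n) ℂ))).PosSemidef := by
  have h : (diagonal (fun i => ((d i : ℝ):ℂ))).PosSemidef := by
    rw [Matrix.posSemidef_diagonal_iff]
    intro i
    exact_mod_cast Complex.zero_le_real.mpr (hd i)
  have := h.mul_mul_conjTranspose_same (U : Matrix (Fin n) (Fin n) ℂ)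
  rwa [← Matrix.star_eq_conjTranspose] at this

lemma eventually_posDef {n : ℕ} {A B : Matrix (Fin n) (Fin n) ℂ}
    (hA : A.IsHermitian) (hB : B.PosDef) :
    ∀ᶠ t : ℝ in nhds 0, (B + t • A).PosDef := by
  obtain h0 | h0 := isEmpty_or_nonempty (Fin n)
  · filter_upwards with t
    constructor
    · ext i j; exact h0.elim i
    · intro x hx
      exact absurd (Finsupp.ext fun i => h0.elim i) hx
  · set lam := hB.1.eigenvalues
    set U := hB.1.eigenvectorUnitary
    set alp := hA.eigenvalues
    set V := hA.eigenvectorUnitary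
    obtain ⟨i₀, -, hi₀⟩ := Finset.exists_min_image Finset.univ lam ⟨Classical.arbitrary _, Finset.mem_univ _⟩
    obtain ⟨j₀, -, hj₀⟩ := Finset.exists_max_image Finset.univ (fun j => |alp j|) ⟨Classical.arbitrary _, Finset.mem_univ _⟩
    set cm := lam i₀ with hcm
    have hcmpos : 0 < cm := hB.eigenvalues_pos i₀
    set C := |alp j₀| with hC
    have hδ : 0 < cm / (2 * (C + 1)) := by positivity
    filter_upwards [Metric.ball_mem_nhds (0:ℝ) hδ] with t ht
    rw [Metric.mem_ball, Real.dist_eq, sub_zero] at ht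
    -- decomposition
    have hBdec : B - (cm:ℂ) • 1
        = (U : Matrix (Fin n) (Fin n) ℂ) * diagonal (fun i => ((lam i - cm : ℝ):ℂ))
          * star (U : Matrix (Fin n) (Fin n) ℂ) := by
      have h1 : diagonal (fun i => ((lam i - cm : ℝ):ℂ))
          = diagonal (fun i => ((lam i : ℝ):ℂ)) - diagonal (fun _ => ((cm:ℝ):ℂ)) := by
        rw [Matrix.diagonal_sub]
        congr 1; ext i; push_cast; ring
      rw [h1, Matrix.mul_sub, Matrix.sub_mul, conj_diag_smul U cm]
      congr 1
      have hBspec : B = (U : Matrix (Fin n) (Fin n) ℂ) * diagonal (fun i => ((lam i : ℝ):ℂ))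
          * star (U : Matrix (Fin n) (Fin n) ℂ) := hB.1.spectral_theorem
      exact hBspec
    have htAdec : ((cm/2 : ℝ):ℂ) • 1 + t • A
        = (V : Matrix (Fin n) (Fin n) ℂ) * diagonal (fun i => ((cm/2 + t * alp i : ℝ):ℂ))
          * star (V : Matrix (Fin n) (Fin n) ℂ) := by
      have h1 : diagonal (fun i => ((cm/2 + t * alp i : ℝ):ℂ))
          = diagonal (fun _ => ((cm/2:ℝ):ℂ)) + (t:ℂ) • diagonal (fun i => ((alp i : ℝ):ℂ)) := by
        ext i j
        rcases eq_or_ne i j with rfl | hij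
        · simp only [Matrix.add_apply, Matrix.smul_apply, Matrix.diagonal_apply_eq,
            smul_eq_mul]
          push_cast; ring
        · simp [Matrix.diagonal_apply_ne _ hij]
      rw [h1, Matrix.mul_add, Matrix.add_mul, conj_diag_smul V (cm/2),
        Matrix.mul_smul, Matrix.smul_mul]
      congr 1
      have hAspec : A = (V : Matrix (Fin n) (Fin n) ℂ) * diagonal (fun i => ((alp i : ℝ):ℂ))
          * star (V : Matrix (Fin n) (Fin n) ℂ) := hA.spectral_theorem
      have hsmul : t • A = (t:ℂ) • A := by ext i j; simp [Complex.real_smul]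
      rw [hsmul, ← hAspec]
    have hsum : B + t • A = (B - (cm:ℂ) • 1) + (((cm/2 : ℝ):ℂ) • 1 + t • A) + ((cm/2 : ℝ):ℂ) • 1 := by
      have : ((cm:ℂ)) = ((cm/2 : ℝ):ℂ) + ((cm/2 : ℝ):ℂ) := by push_cast; ring
      rw [this, add_smul]
      abel
    rw [hsum]
    apply Matrix.PosDef.posSemidef_add
    · apply Matrix.PosSemidef.add
      · rw [hBdec]
        exact posSemidef_conj U (fun i => sub_nonneg.mpr (hi₀ i (Finset.mem_univ i)))
      · rw [htAdec]
        apply posSemidef_conj V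
        intro i
        have h1 : |t * alp i| ≤ |t| * (C + 1) := by
          rw [abs_mul]
          have := hj₀ i (Finset.mem_univ i)
          nlinarith [abs_nonneg t, abs_nonneg (alp i)]
        have h2 : |t| * (C + 1) < cm / 2 := by
          have hC1 : (0:ℝ) < C + 1 := by positivity
          calc |t| * (C + 1) < cm / (2 * (C + 1)) * (C + 1) := by
                exact mul_lt_mul_of_pos_right ht hC1
            _ = cm / 2 := by field_simp
        have := abs_le.mp h1
        nlinarith [abs_lt.mp (lt_of_le_of_lt h1 h2)]
    · have : ((cm/2 : ℝ):ℂ) • (1 : Matrix (Fin n) (Fin n) ℂ) = diagonal (fun _ => ((cm/2:ℝ):ℂ)) := by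
        rw [Matrix.smul_one_eq_diagonal]
      rw [this]
      rw [Matrix.posDef_diagonal_iff]
      intro i
      exact_mod_cast Complex.zero_lt_real.mpr (by positivity)

-- scaling lemma
lemma mlog_smul {n : ℕ} {B : Matrix (Fin n) (Fin n) ℂ} (hB : B.PosDef) {c : ℝ} (hc : 0 < c) :
    mlog (c • B) = Real.log c • (1 : Matrix (Fin n) (Fin n) ℂ) + mlog B := by
  have hsa : IsSelfAdjoint B := hB.1
  have hspec : spectrum ℝ B = Set.range hB.1.eigenvalues :=
    Matrix.IsHermitian.spectrum_real_eq_range_eigenvalues hB.1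
  have hpos : ∀ x ∈ spectrum ℝ B, 0 < x := by
    rw [hspec]; rintro x ⟨i, rfl⟩; exact hB.eigenvalues_pos i
  have hcont : ContinuousOn Real.log ((c * ·) '' spectrum ℝ B) := by
    apply Real.continuousOn_log.mono
    rintro y ⟨x, hx, rfl⟩
    exact ne_of_gt (mul_pos hc (hpos x hx))
  have h1 : cfc (fun x => Real.log (c * x)) B = cfc Real.log (c • B) :=
    cfc_comp_const_mul c Real.log B hcont hsa
  have h2 : cfc (fun x => Real.log (c * x)) B
      = cfc (fun x => Real.log c + Real.log x) B := by
    apply cfc_congr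
    intro x hx
    exact Real.log_mul hc.ne' (hpos x hx).ne'
  have h3 : cfc (fun x => Real.log c + Real.log x) B
      = algebraMap ℝ _ (Real.log c) + cfc Real.log B := by
    apply cfc_const_add _ _ _ (Real.continuousOn_log.mono fun x hx => ne_of_gt (hpos x hx)) hsa
  rw [mlog, mlog, ← h1, h2, h3, Algebra.algebraMap_eq_smul_one]

lemma trace_mul_real {n : ℕ} {M N : Matrix (Fin n) (Fin n) ℂ}
    (hM : M.IsHermitian) (hN : N.IsHermitian) :
    ((M * N).trace : ℂ) = (((M * N).trace).re : ℂ) := by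
  have h : (starRingEnd ℂ) ((M * N).trace) = (M * N).trace := by
    have h1 : star ((M * N).trace) = ((M * N)ᴴ).trace := (Matrix.trace_conjTranspose _).symm
    rw [Complex.star_def] at h1
    rw [h1, Matrix.conjTranspose_mul, hM.eq, hN.eq, Matrix.trace_mul_comm]
  exact (Complex.conj_eq_iff_re.mp h).symm

lemma trace_real {n : ℕ} {M : Matrix (Fin n) (Fin n) ℂ} (hM : M.IsHermitian) :
    (M.trace : ℂ) = ((M.trace).re : ℂ) := by
  have h : (starRingEnd ℂ) (M.trace) = M.trace := by
    have h1 : star (M.trace) = (Mᴴ).trace := (Matrix.trace_conjTranspose _).symm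
    rw [Complex.star_def] at h1
    rw [h1, hM.eq]
  exact (Complex.conj_eq_iff_re.mp h).symm

lemma continuous_trace_mul {n : ℕ} (C : Matrix (Fin n) (Fin n) ℂ) :
    Continuous fun M : Matrix (Fin n) (Fin n) ℂ => (C * M).trace := by
  have h : (fun M : Matrix (Fin n) (Fin n) ℂ => (C * M).trace)
      = fun M => ∑ i, ∑ k, C i k * M k i := by
    funext M
    rw [Matrix.trace]
    apply Finset.sum_congr rfl
    intro i _
    rw [Matrix.diag, Matrix.mul_apply]
  rw [h]
  apply continuous_finset_sum
  intro i _
  apply continuous_finset_sum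
  intro k _
  exact continuous_const.mul ((continuous_apply i).comp (continuous_apply k))

theorem part1 {n : ℕ} (A B D : Matrix (Fin n) (Fin n) ℂ)
    (hA : A.IsHermitian) (hB : B.PosDef)
    (hD : Tendsto (fun t : ℝ => t⁻¹ • (mlog (B + t • A) - mlog B)) (nhdsWithin 0 {0}ᶜ)
      (nhds D)) :
    (B * D).trace = A.trace := by
  set Δ : ℝ → Matrix (Fin n) (Fin n) ℂ := fun t => mlog (B + t • A) - mlog B with hΔ
  -- Δ → 0
  have hΔ0 : Tendsto Δ (nhdsWithin 0 {0}ᶜ) (nhds 0) := by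
    have h1 : Tendsto (fun t : ℝ => t • (t⁻¹ • Δ t)) (nhdsWithin 0 {0}ᶜ)
        (nhds ((0:ℝ) • D)) :=
      (tendsto_id.mono_left nhdsWithin_le_nhds).smul hD
    rw [zero_smul] at h1
    refine h1.congr' ?_
    filter_upwards [self_mem_nhdsWithin] with t ht
    rw [smul_smul, mul_inv_cancel₀ ht, one_smul]
  -- e t → 0
  have hcontA := continuous_trace_mul A
  have hcontB := continuous_trace_mul B
  set e : ℝ → ℝ := fun t => ((A * Δ t).trace).re with he
  have he0 : Tendsto e (nhdsWithin 0 {0}ᶜ) (nhds 0) := by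
    have := (Complex.continuous_re.comp hcontA).tendsto 0 |>.comp hΔ0
    simpa [Function.comp_def, he] using this
  set g : ℝ → ℝ := fun t => ((B * Δ t).trace).re with hg
  set a : ℝ := (A.trace).re with ha
  -- Hermitian facts
  have hmB : (mlog B).IsHermitian := mlog_isHermitian hB.1
  have hherm : ∀ t : ℝ, (B + t • A).PosDef → (Δ t).IsHermitian := by
    intro t hpos
    exact (mlog_isHermitian hpos.1).sub hmB
  -- key bound
  have hbound : ∀ᶠ t in nhdsWithin (0:ℝ) {0}ᶜ, |t⁻¹ * g t - a| ≤ |e t| := by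
    filter_upwards [eventually_nhdsWithin_of_eventually_nhds (eventually_posDef hA hB),
      self_mem_nhdsWithin] with t hpos ht0
    set X := B + t • A with hX
    -- trace (X - B) = t • trace A
    have htr : ((X - B).trace) = (t : ℂ) * A.trace := by
      rw [hX]
      simp only [add_sub_cancel_left, Matrix.trace_smul]
      rw [Complex.real_smul]
    have htrre : ((X.trace - B.trace)).re = t * a := by
      rw [← Matrix.trace_sub, htr]
      simp [Complex.mul_re, ha]
    -- Klein 1 : g t ≤ t * a
    have hk1 := klein hB hpos
    have hmlogsub : mlog B - mlog X = -(Δ t) := by rw [hΔ]; simp [hX]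
    have hg1 : g t ≤ t * a := by
      rw [hmlogsub] at hk1
      have h2 : ((B * -(Δ t)).trace).re = -(g t) := by
        rw [Matrix.mul_neg, Matrix.trace_neg, Complex.neg_re]
      rw [h2] at hk1
      have h3 : ((B.trace - X.trace)).re = -(t * a) := by
        have : B.trace - X.trace = -(X.trace - B.trace) := by ring
        rw [this, Complex.neg_re, htrre]
      rw [h3] at hk1
      linarith
    -- Klein 2 : t * a ≤ g t + t * e t
    have hk2 := klein hpos hB
    have hmlogsub2 : mlog X - mlog B = Δ t := by rw [hΔ]
    have hg2 : t * a ≤ g t + t * e t := by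
      rw [hmlogsub2, htrre] at hk2
      have hXmul : (X * Δ t) = B * Δ t + (t:ℂ) • (A * Δ t) := by
        rw [hX, Matrix.add_mul]
        congr 1
        have : t • A = (t:ℂ) • A := by ext i j; simp [Complex.real_smul]
        rw [this, Matrix.smul_mul]
      rw [hXmul] at hk2
      have : ((B * Δ t + (t:ℂ) • (A * Δ t)).trace).re = g t + t * e t := by
        rw [Matrix.trace_add, Matrix.trace_smul, Complex.add_re]
        congr 1
        rw [smul_eq_mul, Complex.mul_re]
        simp [he]
      rw [this] at hk2
      exact hk2
    -- combine
    have h4 : 0 ≤ t * a - g t := by linarith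
    have h5 : t * a - g t ≤ t * e t := by linarith
    have h6 : |t * a - g t| ≤ |t * e t| := by
      rw [abs_of_nonneg h4]
      exact h5.trans (le_abs_self _)
    have ht0' : t ≠ 0 := ht0
    have htabs : (0:ℝ) < |t| := abs_pos.mpr ht0'
    have h7 : t⁻¹ * g t - a = (g t - t * a) / t := by field_simp
    have h6' : |t * a - g t| ≤ |t| * |e t| := by rwa [abs_mul] at h6
    calc |t⁻¹ * g t - a| = |t * a - g t| / |t| := by rw [h7, abs_div, abs_sub_comm]
      _ ≤ (|t| * |e t|) / |t| := by gcongr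
      _ = |e t| := by field_simp
  -- squeeze
  have hsq : Tendsto (fun t => t⁻¹ * g t - a) (nhdsWithin (0:ℝ) {0}ᶜ) (nhds 0) := by
    refine squeeze_zero_norm' (a := fun t => |e t|) ?_ ?_
    · filter_upwards [hbound] with t ht using ht
    · have : Tendsto (fun t => |e t|) (nhdsWithin (0:ℝ) {0}ᶜ) (nhds |0|) :=
        (continuous_abs.tendsto 0).comp he0
      simpa using this
  have hsq2 : Tendsto (fun t => t⁻¹ * g t) (nhdsWithin (0:ℝ) {0}ᶜ) (nhds a) := by
    have := hsq.add_const a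
    simpa using this
  -- complex side
  have hcplx : Tendsto (fun t => (B * (t⁻¹ • Δ t)).trace) (nhdsWithin (0:ℝ) {0}ᶜ)
      (nhds ((B * D).trace)) := (hcontB.tendsto D).comp hD
  have heq : (fun t => (B * (t⁻¹ • Δ t)).trace)
      =ᶠ[nhdsWithin (0:ℝ) {0}ᶜ] fun t => ((t⁻¹ * g t : ℝ) : ℂ) := by
    filter_upwards [eventually_nhdsWithin_of_eventually_nhds (eventually_posDef hA hB)]
      with t hpos
    have h1 : B * (t⁻¹ • Δ t) = t⁻¹ • (B * Δ t) := Matrix.mul_smul _ _ _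
    rw [h1, Matrix.trace_smul]
    have h2 : ((B * Δ t).trace : ℂ) = ((g t : ℝ) : ℂ) := trace_mul_real hB.1 (hherm t hpos)
    rw [h2, Complex.real_smul]
    push_cast
    ring
  have hcplx2 : Tendsto (fun t => ((t⁻¹ * g t : ℝ) : ℂ)) (nhdsWithin (0:ℝ) {0}ᶜ)
      (nhds ((a : ℝ) : ℂ)) := (Complex.continuous_ofReal.tendsto a).comp hsq2
  have := tendsto_nhds_unique (hcplx.congr' heq) hcplx2
  rw [this, trace_real hA, ha]

lemma part2 {n : ℕ} {B : Matrix (Fin n) (Fin n) ℂ} (hB : B.PosDef) :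
    Tendsto (fun t : ℝ => t⁻¹ • (mlog (B + t • B) - mlog B)) (nhdsWithin 0 {0}ᶜ)
      (nhds (1 : Matrix (Fin n) (Fin n) ℂ)) := by
  have hslope : Tendsto (fun t : ℝ => t⁻¹ * Real.log (1 + t)) (nhdsWithin 0 {0}ᶜ) (nhds 1) := by
    have h : HasDerivAt (fun t : ℝ => Real.log (1 + t)) 1 0 := by
      have := (Real.hasDerivAt_log (by norm_num : (1:ℝ) + 0 ≠ 0)).comp 0
        ((hasDerivAt_id (0:ℝ)).const_add 1)
      simpa [Function.comp_def] using this
    have := hasDerivAt_iff_tendsto_slope.mp h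
    refine this.congr ?_
    intro t
    simp [slope_def_field, Real.log_one]
    ring
  have hmain : Tendsto (fun t : ℝ => (t⁻¹ * Real.log (1 + t)) • (1 : Matrix (Fin n) (Fin n) ℂ))
      (nhdsWithin 0 {0}ᶜ) (nhds (1 : Matrix (Fin n) (Fin n) ℂ)) := by
    have hc : Tendsto (fun _ : ℝ => (1 : Matrix (Fin n) (Fin n) ℂ)) (nhdsWithin 0 {0}ᶜ)
        (nhds 1) := tendsto_const_nhds
    have := hslope.smul hc
    simpa using this
  refine hmain.congr' ?_ |>.mono_left le_rfl
  have hIoo : Set.Ioo (-1 : ℝ) 1 ∈ nhdsWithin (0:ℝ) {0}ᶜ :=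
    mem_nhdsWithin_of_mem_nhds (Ioo_mem_nhds (by norm_num) (by norm_num))
  filter_upwards [hIoo, self_mem_nhdsWithin] with t ht ht0
  have hc : 0 < 1 + t := by linarith [ht.1]
  have hBt : B + t • B = (1 + t) • B := by
    rw [add_smul, one_smul]
  rw [hBt, mlog_smul hB hc]
  rw [add_sub_cancel_right, smul_smul]


/-- for `B` positive definite Hermitian and `A` Hermitian, the Fréchet derivative
`Dlog[B](A)` of the matrix logarithm satisfies `tr (B ⬝ Dlog[B](A)) = tr A`, and
`Dlog[B](B) = I`. -/
theorem trace_frechet_log_and_id {n : ℕ} (A B D : Matrix (Fin n) (Fin n) ℂ)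
    (hA : A.IsHermitian) (hB : B.PosDef)
    (hD : Tendsto (fun t : ℝ => t⁻¹ • (mlog (B + t • A) - mlog B)) (nhdsWithin 0 {0}ᶜ)
      (nhds D)) :
    (B * D).trace = A.trace ∧
      Tendsto (fun t : ℝ => t⁻¹ • (mlog (B + t • B) - mlog B)) (nhdsWithin 0 {0}ᶜ)
        (nhds (1 : Matrix (Fin n) (Fin n) ℂ)) :=
  ⟨part1 A B D hA hB hD, part2 hB⟩
end

section
/- For B self-adjoint positive with bounded inverse and A self-adjoint bounded, the Fréchet derivative of the operator logarithm satisfies Dlog[B](A) = ∫_0^∞ (B + xI)^{-1} A (B + xI)^{-1} dx. -/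
open scoped InnerProductSpace
set_option maxHeartbeats 1000000
set_option synthInstance.maxHeartbeats 400000
section SetupSection
variable {H : Type*} [NormedAddCommGroup H] [InnerProductSpace ℂ H] [CompleteSpace H]

lemma my_coercive_lower {T : H →L[ℂ] H} {c : ℝ}
    (h : ∀ x : H, c * ‖x‖ ^ 2 ≤ (inner ℂ x (T x) : ℂ).re) (x : H) : c * ‖x‖ * ‖x‖ ≤ ‖T x‖ * ‖x‖ := by
  have h1 := h x
  have h2 : (inner ℂ x (T x) : ℂ).re ≤ ‖(inner ℂ x (T x) : ℂ)‖ := Complex.re_le_norm _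
  have h3 : ‖(inner ℂ x (T x) : ℂ)‖ ≤ ‖x‖ * ‖T x‖ := norm_inner_le_norm x (T x)
  nlinarith [norm_nonneg x, norm_nonneg (T x)]

lemma my_coercive_norm_le {T : H →L[ℂ] H} {c : ℝ}
    (h : ∀ x : H, c * ‖x‖ ^ 2 ≤ (inner ℂ x (T x) : ℂ).re) (x : H) : c * ‖x‖ ≤ ‖T x‖ := by
  rcases eq_or_ne x 0 with rfl | hx
  · simp
  · exact le_of_mul_le_mul_right (my_coercive_lower h x) (norm_pos_iff.mpr hx)

lemma my_coercive_isUnit {T : H →L[ℂ] H} {c : ℝ} (hc : 0 < c)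
    (h : ∀ x : H, c * ‖x‖ ^ 2 ≤ (inner ℂ x (T x) : ℂ).re) : IsUnit T := by
  have hlow := my_coercive_norm_le h
  have hanti : AntilipschitzWith (⟨c, hc.le⟩ : NNReal)⁻¹ T := by
    refine ContinuousLinearMap.antilipschitz_of_bound T fun x => ?_
    have : c * ‖x‖ ≤ ‖T x‖ := hlow x
    show ‖x‖ ≤ c⁻¹ * ‖T x‖
    rw [inv_mul_eq_div, le_div_iff₀ (by exact_mod_cast hc)]
    calc ‖x‖ * c = c * ‖x‖ := mul_comm _ _
      _ ≤ ‖T x‖ := this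
  have hinj : Function.Injective T := hanti.injective
  have hker : LinearMap.ker (T : H →ₗ[ℂ] H) = ⊥ := by
    rw [Submodule.eq_bot_iff]
    intro v hv
    exact hinj (by simpa using hv)
  have hclosed : IsClosed (Set.range T) := hanti.isClosed_range T.uniformContinuous
  have hclosed' : IsClosed ((LinearMap.range (T : H →ₗ[ℂ] H) : Submodule ℂ H) : Set H) := by
    rw [LinearMap.coe_range]; exact hclosed
  haveI : CompleteSpace (LinearMap.range (T : H →ₗ[ℂ] H) : Submodule ℂ H) := hclosed'.completeSpace_coe
  have hrange : LinearMap.range (T : H →ₗ[ℂ] H) = ⊤ := by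
    rw [← Submodule.orthogonal_eq_bot_iff]
    rw [Submodule.eq_bot_iff]
    intro v hv
    have h0 : (inner ℂ (T v) v : ℂ) = 0 := hv (T v) ⟨v, rfl⟩
    have h0' : (inner ℂ v (T v) : ℂ) = 0 := by
      rw [← inner_conj_symm, h0, map_zero]
    have hv2 := h v
    rw [h0'] at hv2
    simp only [Complex.zero_re] at hv2
    by_contra hv0
    have : 0 < ‖v‖ := norm_pos_iff.mpr hv0
    exact absurd hv2 (not_le.mpr (mul_pos hc (pow_pos this 2)))
  let e := ContinuousLinearEquiv.ofBijective T hker hrange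
  refine ⟨⟨T, (e.symm : H →L[ℂ] H), ?_, ?_⟩, rfl⟩
  · ext x
    show T ((e.symm : H →L[ℂ] H) x) = x
    have h1 : T ((e.symm : H →L[ℂ] H) x) = e (e.symm x) := rfl
    rw [h1, e.apply_symm_apply]
  · ext x
    show (e.symm : H →L[ℂ] H) (T x) = x
    have h1 : (e.symm : H →L[ℂ] H) (T x) = e.symm (e x) := rfl
    rw [h1, e.symm_apply_apply]

lemma my_inverse_norm_le {T : H →L[ℂ] H} {c : ℝ} (hc : 0 < c)
    (h : ∀ x : H, c * ‖x‖ ^ 2 ≤ (inner ℂ x (T x) : ℂ).re) : ‖Ring.inverse T‖ ≤ c⁻¹ := by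
  have hu := my_coercive_isUnit hc h
  refine ContinuousLinearMap.opNorm_le_bound _ (by positivity) fun v => ?_
  have h1 : T (Ring.inverse T v) = v := by
    have := Ring.mul_inverse_cancel T hu
    calc T (Ring.inverse T v) = (T * Ring.inverse T) v := rfl
      _ = v := by rw [this]; rfl
  have := my_coercive_norm_le h (Ring.inverse T v)
  rw [h1] at this
  rw [inv_mul_eq_div, le_div_iff₀ hc, mul_comm]
  exact this
open scoped InnerProductSpace
variable {H : Type*} [NormedAddCommGroup H] [InnerProductSpace ℂ H] [CompleteSpace H]

lemma my_smul_coe (μ : ℝ) (v : H) : (μ : ℂ) • v = μ • v := by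
  rw [← smul_one_smul ℂ μ v]; norm_num

lemma my_add_coercive {T : H →L[ℂ] H} {c : ℝ}
    (h : ∀ v : H, c * ‖v‖ ^ 2 ≤ (inner ℂ v (T v) : ℂ).re) (μ : ℝ) (v : H) :
    (c + μ) * ‖v‖ ^ 2 ≤ (inner ℂ v ((T + μ • 1) v) : ℂ).re := by
  have h1 : (T + μ • (1 : H →L[ℂ] H)) v = T v + μ • v := by
    simp [ContinuousLinearMap.add_apply]
  rw [h1, inner_add_right, ← my_smul_coe, inner_smul_right, Complex.add_re]
  have h2 : ((μ : ℂ) * (inner ℂ v v : ℂ)).re = μ * ‖v‖ ^ 2 := by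
    rw [inner_self_eq_norm_sq_to_K]
    push_cast
    simp [pow_two]
  rw [h2]
  nlinarith [h v]

lemma my_sub_coercive {T : H →L[ℂ] H} {c : ℝ}
    (h : ∀ v : H, c * ‖v‖ ^ 2 ≤ (inner ℂ v (T v) : ℂ).re) (μ : ℝ) (v : H) :
    (c - μ) * ‖v‖ ^ 2 ≤ (inner ℂ v ((T - μ • 1) v) : ℂ).re := by
  have := my_add_coercive h (-μ) v
  simpa [sub_eq_add_neg] using this

lemma my_spectrum_subset {T : H →L[ℂ] H} {c : ℝ} (hc : 0 < c)
    (h : ∀ v : H, c * ‖v‖ ^ 2 ≤ (inner ℂ v (T v) : ℂ).re) : spectrum ℝ T ⊆ Set.Ici c := by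
  intro μ hμ
  by_contra hlt
  rw [Set.mem_Ici, not_le] at hlt
  have hu : IsUnit (T - μ • (1 : H →L[ℂ] H)) :=
    my_coercive_isUnit (by linarith : (0:ℝ) < c - μ) (my_sub_coercive h μ)
  have hu2 : IsUnit (algebraMap ℝ (H →L[ℂ] H) μ - T) := by
    have : algebraMap ℝ (H →L[ℂ] H) μ - T = -(T - μ • 1) := by
      rw [Algebra.algebraMap_eq_smul_one]; abel
    rw [this]
    exact hu.neg
  exact (spectrum.mem_iff.mp hμ) hu2

lemma my_spectrum_mem {T : H →L[ℂ] H} {c : ℝ} (hc : 0 < c)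
    (h : ∀ v : H, c * ‖v‖ ^ 2 ≤ (inner ℂ v (T v) : ℂ).re) {y : ℝ} (hy : y ∈ spectrum ℝ T) :
    c ≤ y ∧ y ≤ ‖T‖ * ‖(1 : H →L[ℂ] H)‖ := by
  refine ⟨my_spectrum_subset hc h hy, ?_⟩
  have := spectrum.norm_le_norm_mul_of_mem hy
  calc y ≤ |y| := le_abs_self y
    _ = ‖y‖ := rfl
    _ ≤ _ := this
open MeasureTheory Filter

lemma my_tendsto_inv_shift {m : ℝ} : Tendsto (fun x : ℝ => (m + x)⁻¹) atTop (nhds 0) :=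
  tendsto_inv_atTop_zero.comp (tendsto_atTop_add_const_left _ m tendsto_id)

lemma my_hasDerivAt_inv_shift {m : ℝ} {x : ℝ} (hx : m + x ≠ 0) :
    HasDerivAt (fun y : ℝ => -(m + y)⁻¹) (((m + x) ^ 2)⁻¹) x := by
  have h := (((hasDerivAt_id x).const_add m).inv hx).neg
  refine h.congr_deriv ?_
  simp
  rw [neg_div, neg_neg, one_div]

lemma my_integrableOn_inv_sq {m : ℝ} (hm : 0 < m) :
    IntegrableOn (fun x : ℝ => ((m + x) ^ 2)⁻¹) (Set.Ioi 0) := by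
  refine integrableOn_Ioi_deriv_of_nonneg' (l := 0) (g := fun y => -(m + y)⁻¹)
    (fun x hx => my_hasDerivAt_inv_shift (by simp only [Set.mem_Ici] at hx; positivity)) 
    (fun x hx => by simp only [Set.mem_Ioi] at hx; positivity) ?_
  simpa using my_tendsto_inv_shift.neg

lemma my_hasDerivAt_inv_sq_shift {m : ℝ} {x : ℝ} (hx : m + x ≠ 0) :
    HasDerivAt (fun y : ℝ => -(2⁻¹ * ((m + y) ^ 2)⁻¹)) (((m + x) ^ 3)⁻¹) x := by
  have h0 : ((m + x) ^ 2 : ℝ) ≠ 0 := pow_ne_zero _ hx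
  have h := ((((hasDerivAt_id x).const_add m).pow 2).inv h0).const_mul (2⁻¹ : ℝ) |>.neg
  refine h.congr_deriv ?_
  simp
  field_simp

lemma my_integrableOn_inv_cube {m : ℝ} (hm : 0 < m) :
    IntegrableOn (fun x : ℝ => ((m + x) ^ 3)⁻¹) (Set.Ioi 0) := by
  refine integrableOn_Ioi_deriv_of_nonneg' (l := 0) (g := fun y => -(2⁻¹ * ((m + y) ^ 2)⁻¹))
    (fun x hx => my_hasDerivAt_inv_sq_shift (by simp only [Set.mem_Ici] at hx; positivity))
    (fun x hx => by simp only [Set.mem_Ioi] at hx; positivity) ?_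
  have : Tendsto (fun x : ℝ => -(2⁻¹ * ((m + x)⁻¹ * (m + x)⁻¹))) atTop (nhds (-(2⁻¹ * (0 * 0)))) :=
    ((my_tendsto_inv_shift.mul my_tendsto_inv_shift).const_mul _).neg
  simpa [pow_two, mul_inv] using this

lemma my_scalar_integrand_eq {y x : ℝ} (h1 : (1:ℝ) + x ≠ 0) (h2 : y + x ≠ 0) :
    (1 + x)⁻¹ - (y + x)⁻¹ = (y - 1) / ((1 + x) * (y + x)) := by
  field_simp
  ring

lemma my_scalar_integrableOn {y : ℝ} (hy : 0 < y) :
    IntegrableOn (fun x : ℝ => (1 + x)⁻¹ - (y + x)⁻¹) (Set.Ioi 0) := by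
  set m := min 1 y with hm
  have hm0 : 0 < m := lt_min one_pos hy
  refine Integrable.mono' ((my_integrableOn_inv_sq hm0).const_mul |y - 1|) ?_ ?_
  · apply ContinuousOn.aestronglyMeasurable ?_ measurableSet_Ioi
    intro x hx
    simp only [Set.mem_Ioi] at hx
    exact ((continuousWithinAt_const.add continuousWithinAt_id).inv₀
        (by dsimp; intro hcon; nlinarith)).sub
      ((continuousWithinAt_const.add continuousWithinAt_id).inv₀
        (by dsimp; intro hcon; nlinarith))
  · filter_upwards [self_mem_ae_restrict measurableSet_Ioi] with x hx
    simp only [Set.mem_Ioi] at hx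
    have h1 : (0:ℝ) < 1 + x := by linarith
    have h2 : (0:ℝ) < y + x := by linarith
    rw [my_scalar_integrand_eq h1.ne' h2.ne', Real.norm_eq_abs, abs_div,
      abs_of_pos (show (0:ℝ) < (1 + x) * (y + x) by positivity)]
    have e1 : m + x ≤ 1 + x := add_le_add_left (min_le_left 1 y) x
    have e2 : m + x ≤ y + x := add_le_add_left (min_le_right 1 y) x
    have hsq : (m + x) ^ 2 ≤ (1 + x) * (y + x) := by
      rw [pow_two]
      exact mul_le_mul e1 e2 (by positivity) (by positivity)
    rw [div_le_iff₀ (by positivity)]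
    calc |y - 1| = |y - 1| * (((m+x)^2)⁻¹ * (m+x)^2) := by
          field_simp
      _ ≤ |y - 1| * (((m+x)^2)⁻¹ * ((1 + x) * (y + x))) := by
          gcongr
      _ = |y - 1| * ((m+x)^2)⁻¹ * ((1 + x) * (y + x)) := by ring

lemma my_scalar_log_integral {y : ℝ} (hy : 0 < y) :
    ∫ x in Set.Ioi (0:ℝ), ((1 + x)⁻¹ - (y + x)⁻¹) = Real.log y := by
  have key := integral_Ioi_of_hasDerivAt_of_tendsto (a := (0:ℝ))
    (f := fun x => Real.log (1 + x) - Real.log (y + x))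
    (f' := fun x => (1 + x)⁻¹ - (y + x)⁻¹) (m := 0) ?_ ?_ (my_scalar_integrableOn hy) ?_
  · rw [key]
    simp [Real.log_one]
  · apply ContinuousAt.continuousWithinAt
    have c1 : ContinuousAt (fun x : ℝ => Real.log (1 + x)) 0 :=
      (Real.continuousAt_log (by norm_num)).comp (by fun_prop)
    have c2 : ContinuousAt (fun x : ℝ => Real.log (y + x)) 0 :=
      (Real.continuousAt_log (by simpa using hy.ne')).comp (by fun_prop)
    exact c1.sub c2
  · intro x hx
    simp only [Set.mem_Ioi] at hx
    have h1 : (0:ℝ) < 1 + x := by linarith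
    have h2 : (0:ℝ) < y + x := by linarith
    have d1 : HasDerivAt (fun x : ℝ => Real.log (1 + x)) ((1+x)⁻¹) x := by
      have := ((hasDerivAt_id x).const_add 1).log h1.ne'
      simpa using this
    have d2 : HasDerivAt (fun x : ℝ => Real.log (y + x)) ((y+x)⁻¹) x := by
      have := ((hasDerivAt_id x).const_add y).log h2.ne'
      simpa using this
    exact d1.sub d2
  · have hquot : Tendsto (fun x : ℝ => (1 + x) / (y + x)) atTop (nhds 1) := by
      have t1 : Tendsto (fun x : ℝ => x⁻¹ + 1) atTop (nhds 1) := by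
        simpa using tendsto_inv_atTop_zero.add (tendsto_const_nhds (x := (1:ℝ)))
      have t2 : Tendsto (fun x : ℝ => y * x⁻¹ + 1) atTop (nhds 1) := by
        simpa using (tendsto_inv_atTop_zero.const_mul y).add (tendsto_const_nhds (x := (1:ℝ)))
      have := t1.div t2 one_ne_zero
      rw [div_one] at this
      apply this.congr'
      filter_upwards [eventually_gt_atTop 0] with x hx
      rw [Pi.div_apply]
      field_simp
    have hlog : Tendsto (fun x : ℝ => Real.log ((1 + x) / (y + x))) atTop (nhds 0) := by
      have := (Real.continuousAt_log one_ne_zero).tendsto.comp hquot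
      simpa [Function.comp_def] using this
    apply hlog.congr'
    filter_upwards [eventually_gt_atTop 0] with x hx
    have h1 : (0:ℝ) < 1 + x := by linarith
    have h2 : (0:ℝ) < y + x := by linarith
    rw [Real.log_div h1.ne' h2.ne']

section CfcSection
open MeasureTheory Filter

lemma my_scalar_bound {c M y x : ℝ} (hc : 0 < c) (hcy : c ≤ y) (hyM : y ≤ M) (hx : 0 ≤ x) :
    |(1 + x)⁻¹ - (y + x)⁻¹| ≤ (M + 1) * ((min 1 c + x) ^ 2)⁻¹ := by
  set m := min 1 c with hm
  have hm0 : 0 < m := lt_min one_pos hc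
  have h1 : (0:ℝ) < 1 + x := by linarith
  have h2 : (0:ℝ) < y + x := by linarith
  have e1 : m + x ≤ 1 + x := add_le_add_left (min_le_left 1 c) x
  have e2 : m + x ≤ y + x := add_le_add_left ((min_le_right 1 c).trans hcy) x
  have hsq : (m + x) ^ 2 ≤ (1 + x) * (y + x) := by
    rw [pow_two]
    exact mul_le_mul e1 e2 (by positivity) (by positivity)
  have habs : |y - 1| ≤ M + 1 := by
    rw [abs_sub_le_iff]
    constructor <;> nlinarith
  rw [my_scalar_integrand_eq h1.ne' h2.ne', abs_div,
    abs_of_pos (show (0:ℝ) < (1 + x) * (y + x) by positivity), div_le_iff₀ (by positivity)]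
  calc |y - 1| ≤ M + 1 := habs
    _ = (M + 1) * (((m+x)^2)⁻¹ * (m+x)^2) := by field_simp
    _ ≤ (M + 1) * (((m+x)^2)⁻¹ * ((1 + x) * (y + x))) := by gcongr; nlinarith
    _ = (M + 1) * ((m+x)^2)⁻¹ * ((1 + x) * (y + x)) := by ring

variable {T : H →L[ℂ] H} {c : ℝ}

lemma my_unit_shift (hc : 0 < c)
    (h : ∀ v : H, c * ‖v‖ ^ 2 ≤ (inner ℂ v (T v) : ℂ).re) {x : ℝ} (hx : 0 ≤ x) :
    IsUnit (T + x • (1 : H →L[ℂ] H)) :=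
  my_coercive_isUnit (by linarith : (0:ℝ) < c + x) (my_add_coercive h x)

lemma my_inverse_shift_norm (hc : 0 < c)
    (h : ∀ v : H, c * ‖v‖ ^ 2 ≤ (inner ℂ v (T v) : ℂ).re) {x : ℝ} (hx : 0 ≤ x) :
    ‖Ring.inverse (T + x • (1 : H →L[ℂ] H))‖ ≤ (c + x)⁻¹ :=
  my_inverse_norm_le (by linarith : (0:ℝ) < c + x) (my_add_coercive h x)

lemma my_shift_ne (hc : 0 < c)
    (h : ∀ v : H, c * ‖v‖ ^ 2 ≤ (inner ℂ v (T v) : ℂ).re) {x : ℝ} (hx : 0 ≤ x) :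
    ∀ y ∈ spectrum ℝ T, y + x ≠ 0 := by
  intro y hy
  have := my_spectrum_subset hc h hy
  simp only [Set.mem_Ici] at this
  exact (by nlinarith : (0:ℝ) < y + x).ne'

lemma my_cfc_shift (hT : IsSelfAdjoint T) (hc : 0 < c)
    (h : ∀ v : H, c * ‖v‖ ^ 2 ≤ (inner ℂ v (T v) : ℂ).re) {x : ℝ} (hx : 0 ≤ x) :
    cfc (fun y : ℝ => (y + x)⁻¹) T = Ring.inverse (T + x • (1 : H →L[ℂ] H)) := by
  have hne := my_shift_ne hc h hx
  have h1 : cfc (fun y : ℝ => y + x) T = T + x • 1 := by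
    rw [cfc_add_const x (fun y : ℝ => y) T (by fun_prop) hT, cfc_id' ℝ T,
      Algebra.algebraMap_eq_smul_one]
  rw [← h1]
  exact cfc_inv (f := fun y : ℝ => y + x) (a := T) hne (by fun_prop) hT

lemma my_cfc_integrand (hT : IsSelfAdjoint T) (hc : 0 < c)
    (h : ∀ v : H, c * ‖v‖ ^ 2 ≤ (inner ℂ v (T v) : ℂ).re) {x : ℝ} (hx : 0 ≤ x) :
    cfc (fun y : ℝ => (1 + x)⁻¹ - (y + x)⁻¹) T
      = (1 + x)⁻¹ • (1 : H →L[ℂ] H) - Ring.inverse (T + x • (1 : H →L[ℂ] H)) := by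
  have hne := my_shift_ne hc h hx
  have hcont : ContinuousOn (fun y : ℝ => (y + x)⁻¹) (spectrum ℝ T) := by
    intro y hy
    exact ((continuousWithinAt_id.add continuousWithinAt_const).inv₀ (hne y hy))
  rw [cfc_sub (fun _ : ℝ => (1 + x)⁻¹) (fun y : ℝ => (y + x)⁻¹) T (by fun_prop) hcont,
    cfc_const _ _ hT, Algebra.algebraMap_eq_smul_one, my_cfc_shift hT hc h hx]

end CfcSection

section LogIntegral
open MeasureTheory Filter

variable {T : H →L[ℂ] H} {c : ℝ}

lemma my_log_parts (hT : IsSelfAdjoint T) (hc : 0 < c)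
    (h : ∀ v : H, c * ‖v‖ ^ 2 ≤ (inner ℂ v (T v) : ℂ).re) :
    IntegrableOn (fun x : ℝ => (1 + x)⁻¹ • (1 : H →L[ℂ] H)
        - Ring.inverse (T + x • (1 : H →L[ℂ] H))) (Set.Ioi 0)
    ∧ cfc Real.log T = ∫ x in Set.Ioi (0:ℝ),
        ((1 + x)⁻¹ • (1 : H →L[ℂ] H) - Ring.inverse (T + x • (1 : H →L[ℂ] H))) := by
  haveI : CompactSpace (spectrum ℝ T) := isCompact_iff_compactSpace.mp (spectrum.isCompact T)
  set σ := spectrum ℝ T with hσ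
  set M := ‖T‖ * ‖(1 : H →L[ℂ] H)‖ with hM
  have hM0 : 0 ≤ M := by positivity
  set m := min 1 c with hm
  have hm0 : 0 < m := lt_min one_pos hc
  have hmem : ∀ y : σ, c ≤ (y : ℝ) ∧ (y : ℝ) ≤ M := fun y => my_spectrum_mem hc h y.2
  have hne : ∀ (x : ℝ) (y : σ), (y : ℝ) + |x| ≠ 0 := by
    intro x y
    have h1 := (hmem y).1
    have h2 := abs_nonneg x
    exact (by nlinarith : (0:ℝ) < (y : ℝ) + |x|).ne'
  set F : ℝ → C(σ, ℝ) := fun x =>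
    ⟨fun y => (1 + |x|)⁻¹ - ((y : ℝ) + |x|)⁻¹, by
      refine continuous_const.sub ?_
      exact (continuous_subtype_val.add continuous_const).inv₀ (hne x)⟩ with hF
  have hFcont : Continuous F := by
    apply ContinuousMap.continuous_of_continuous_uncurry
    refine Continuous.sub ?_ ?_
    · exact (continuous_const.add (continuous_abs.comp continuous_fst)).inv₀
        (fun p => (by positivity : (0:ℝ) < 1 + |p.1|).ne')
    · exact ((continuous_subtype_val.comp continuous_snd).add
        (continuous_abs.comp continuous_fst)).inv₀ (fun p => hne p.1 p.2)
  have hFnorm : ∀ x : ℝ, 0 ≤ x → ‖F x‖ ≤ (M + 1) * ((m + x) ^ 2)⁻¹ := by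
    intro x hx
    refine (ContinuousMap.norm_le _ (by positivity)).mpr fun y => ?_
    simp only [hF, ContinuousMap.coe_mk]
    rw [Real.norm_eq_abs, abs_of_nonneg hx]
    exact my_scalar_bound hc (hmem y).1 (hmem y).2 hx
  have hFint : IntegrableOn F (Set.Ioi 0) := by
    refine Integrable.mono' ((my_integrableOn_inv_sq hm0).const_mul (M + 1))
      hFcont.aestronglyMeasurable.restrict ?_
    filter_upwards [self_mem_ae_restrict measurableSet_Ioi] with x hx
    exact hFnorm x (le_of_lt hx)
  let φL : C(σ, ℝ) →L[ℝ] (H →L[ℂ] H) :=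
    { toLinearMap := (cfcHom hT (R := ℝ)).toAlgHom.toLinearMap,
      cont := (cfcHom_isClosedEmbedding hT).continuous }
  have hswap : φL (∫ x in Set.Ioi (0:ℝ), F x) = ∫ x in Set.Ioi (0:ℝ), φL (F x) :=
    (ContinuousLinearMap.integral_comp_comm φL hFint).symm
  have hlogres : ContinuousOn Real.log σ := by
    intro y hy
    have h1 := (my_spectrum_mem hc h hy).1
    exact (Real.continuousAt_log (by nlinarith : y ≠ 0)).continuousWithinAt
  have hFval : ∫ x in Set.Ioi (0:ℝ), F x = ⟨σ.restrict Real.log, hlogres.restrict⟩ := by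
    ext y
    have hev := (ContinuousMap.evalCLM (R := ℝ) y).integral_comp_comm hFint
    have h0y : (0:ℝ) < y := lt_of_lt_of_le hc (hmem y).1
    calc (∫ x in Set.Ioi (0:ℝ), F x) y
        = ContinuousMap.evalCLM (R := ℝ) y (∫ x in Set.Ioi (0:ℝ), F x) := rfl
      _ = ∫ x in Set.Ioi (0:ℝ), (F x) y := hev.symm
      _ = ∫ x in Set.Ioi (0:ℝ), ((1 + x)⁻¹ - ((y:ℝ) + x)⁻¹) := by
          refine setIntegral_congr_fun measurableSet_Ioi fun x hx => ?_
          simp only [hF, ContinuousMap.coe_mk]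
          rw [abs_of_nonneg (le_of_lt hx)]
      _ = Real.log y := my_scalar_log_integral h0y
  have hcfclog : cfc Real.log T = φL ⟨σ.restrict Real.log, hlogres.restrict⟩ := by
    rw [cfc_apply Real.log T hT hlogres]
    rfl
  have hpt : ∀ x ∈ Set.Ioi (0:ℝ), φL (F x)
      = (1 + x)⁻¹ • (1 : H →L[ℂ] H) - Ring.inverse (T + x • (1 : H →L[ℂ] H)) := by
    intro x hx
    have hx0 : (0:ℝ) ≤ x := le_of_lt hx
    have hcont : ContinuousOn (fun y : ℝ => (1 + x)⁻¹ - (y + x)⁻¹) σ := fun y hy =>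
      continuousWithinAt_const.sub ((continuousWithinAt_id.add continuousWithinAt_const).inv₀
        (my_shift_ne hc h hx0 y hy))
    have heq : φL (F x) = cfc (fun y : ℝ => (1 + x)⁻¹ - (y + x)⁻¹) T := by
      rw [cfc_apply _ T hT hcont]
      show cfcHom hT (F x) = _
      congr 1
      ext y
      simp only [hF, ContinuousMap.coe_mk, Set.restrict_apply]
      rw [abs_of_nonneg hx0]
    rw [heq, my_cfc_integrand hT hc h hx0]
  constructor
  · refine (φL.integrable_comp hFint).congr ?_
    filter_upwards [self_mem_ae_restrict measurableSet_Ioi] with x hx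
    exact hpt x hx
  · rw [hcfclog, ← hFval, hswap]
    exact setIntegral_congr_fun measurableSet_Ioi hpt

end LogIntegral

section Main
open MeasureTheory Filter

lemma my_inverse_sub {A : Type*} [Ring A] {u v : A} (hu : IsUnit u) (hv : IsUnit v) :
    Ring.inverse u - Ring.inverse v = Ring.inverse v * (v - u) * Ring.inverse u := by
  have : Ring.inverse v * (v - u) * Ring.inverse u = Ring.inverse u - Ring.inverse v := by
    rw [mul_sub, sub_mul, Ring.inverse_mul_cancel _ hv, one_mul, mul_assoc,
      Ring.mul_inverse_cancel _ hu, mul_one]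
  exact this.symm

variable {T : H →L[ℂ] H} {c : ℝ}

lemma my_res_continuousOn (hc : 0 < c)
    (h : ∀ v : H, c * ‖v‖ ^ 2 ≤ (inner ℂ v (T v) : ℂ).re) :
    ContinuousOn (fun x : ℝ => Ring.inverse (T + x • (1 : H →L[ℂ] H))) (Set.Ioi 0) := by
  intro x hx
  apply ContinuousAt.continuousWithinAt
  have hu := my_unit_shift hc h (le_of_lt (Set.mem_Ioi.mp hx))
  have hc1 : ContinuousAt (fun x : ℝ => T + x • (1 : H →L[ℂ] H)) x :=
    (continuous_const.add (continuous_id.smul continuous_const)).continuousAt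
  have h2 := NormedRing.inverse_continuousAt hu.unit
  rw [IsUnit.unit_spec] at h2
  exact ContinuousAt.comp (f := fun x : ℝ => T + x • (1 : H →L[ℂ] H)) h2 hc1

lemma my_kappa_integrableOn {S : H →L[ℂ] H} {cS : ℝ} (W : H →L[ℂ] H)
    (hcS : 0 < cS) (hS : ∀ v : H, cS * ‖v‖ ^ 2 ≤ (inner ℂ v (S v) : ℂ).re)
    (hc : 0 < c) (h : ∀ v : H, c * ‖v‖ ^ 2 ≤ (inner ℂ v (T v) : ℂ).re) :
    IntegrableOn (fun x : ℝ => Ring.inverse (S + x • (1 : H →L[ℂ] H)) * W *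
      Ring.inverse (T + x • (1 : H →L[ℂ] H))) (Set.Ioi 0) := by
  set m := min cS c with hm
  have hm0 : 0 < m := lt_min hcS hc
  refine Integrable.mono' ((my_integrableOn_inv_sq hm0).const_mul ‖W‖) ?_ ?_
  · exact (((my_res_continuousOn hcS hS).mul continuousOn_const).mul
      (my_res_continuousOn hc h)).aestronglyMeasurable_of_isSeparable measurableSet_Ioi
      (TopologicalSpace.IsSeparable.of_separableSpace _)
  · filter_upwards [self_mem_ae_restrict measurableSet_Ioi] with x hx
    have hx0 : (0:ℝ) ≤ x := le_of_lt hx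
    have n1 : ‖Ring.inverse (S + x • (1 : H →L[ℂ] H))‖ ≤ (cS + x)⁻¹ :=
      my_inverse_shift_norm hcS hS hx0
    have n2 : ‖Ring.inverse (T + x • (1 : H →L[ℂ] H))‖ ≤ (c + x)⁻¹ :=
      my_inverse_shift_norm hc h hx0
    have e1 : (cS + x)⁻¹ ≤ (m + x)⁻¹ := by
      apply inv_anti₀ (by positivity)
      exact add_le_add_left (min_le_left _ _) x
    have e2 : (c + x)⁻¹ ≤ (m + x)⁻¹ := by
      apply inv_anti₀ (by positivity)
      exact add_le_add_left (min_le_right _ _) x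
    calc ‖Ring.inverse (S + x • (1 : H →L[ℂ] H)) * W * Ring.inverse (T + x • (1 : H →L[ℂ] H))‖
        ≤ ‖Ring.inverse (S + x • (1 : H →L[ℂ] H)) * W‖ * ‖Ring.inverse (T + x • (1 : H →L[ℂ] H))‖ :=
          norm_mul_le _ _
      _ ≤ (‖Ring.inverse (S + x • (1 : H →L[ℂ] H))‖ * ‖W‖) *
            ‖Ring.inverse (T + x • (1 : H →L[ℂ] H))‖ := by
          gcongr
          exact norm_mul_le _ _
      _ ≤ ((m + x)⁻¹ * ‖W‖) * (m + x)⁻¹ := by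
          gcongr
          exacts [n1.trans e1, n2.trans e2]
      _ = ‖W‖ * ((m + x) ^ 2)⁻¹ := by
          rw [pow_two, mul_inv]
          ring

end Main

end SetupSection

section FinalTheorem
open MeasureTheory Filter

open Filter

/-- for a bounded self-adjoint operator `B` that is positive with bounded inverse,
and `A` bounded self-adjoint, the Fréchet derivative of the operator logarithm satisfies
`Dlog[B](A) = ∫_0^∞ (B + xI)⁻¹ A (B + xI)⁻¹ dx` (convergence in operator norm). -/
theorem frechet_log_operator_integral {H : Type*} [NormedAddCommGroup H]
    [InnerProductSpace ℂ H] [CompleteSpace H] (A B : H →L[ℂ] H)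
    (hA : IsSelfAdjoint A) (hB : IsSelfAdjoint B)
    (hBpos : ∃ ε : ℝ, 0 < ε ∧ ∀ x : H, ε * ‖x‖ ^ 2 ≤ (inner ℂ x (B x) : ℂ).re) :
    Tendsto (fun t : ℝ => t⁻¹ • (cfc Real.log (B + t • A) - cfc Real.log B))
      (nhdsWithin 0 {0}ᶜ)
      (nhds (∫ x in Set.Ioi (0 : ℝ),
        Ring.inverse (B + (x : ℝ) • (1 : H →L[ℂ] H)) * A *
          Ring.inverse (B + (x : ℝ) • (1 : H →L[ℂ] H)))) := by
  obtain ⟨ε, hε, hB2⟩ := hBpos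
  have hε2 : (0:ℝ) < ε / 2 := by positivity
  set δ := ε / (2 * (‖A‖ + 1)) with hδ
  have hδ0 : 0 < δ := by positivity
  -- coercivity of B + t • A
  have hbt : ∀ t : ℝ, |t| ≤ δ → ∀ v : H,
      (ε/2) * ‖v‖ ^ 2 ≤ (inner ℂ v ((B + t • A) v) : ℂ).re := by
    intro t ht v
    have happ : (B + t • A) v = B v + (t : ℂ) • A v := by
      simp [ContinuousLinearMap.add_apply, ContinuousLinearMap.smul_apply, my_smul_coe]
    rw [happ, inner_add_right, inner_smul_right, Complex.add_re]
    have hre : ((t:ℂ) * (inner ℂ v (A v) : ℂ)).re = t * (inner ℂ v (A v) : ℂ).re := by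
      rw [Complex.mul_re]; simp
    rw [hre]
    have h1 : |(inner ℂ v (A v) : ℂ).re| ≤ ‖A‖ * ‖v‖ ^ 2 := by
      have i1 : |(inner ℂ v (A v) : ℂ).re| ≤ ‖(inner ℂ v (A v) : ℂ)‖ := Complex.abs_re_le_norm _
      have i2 : ‖(inner ℂ v (A v) : ℂ)‖ ≤ ‖v‖ * ‖A v‖ := norm_inner_le_norm _ _
      have i3 : ‖A v‖ ≤ ‖A‖ * ‖v‖ := A.le_opNorm v
      have i4 : (0:ℝ) ≤ ‖v‖ := norm_nonneg v
      calc |(inner ℂ v (A v) : ℂ).re| ≤ ‖v‖ * ‖A v‖ := i1.trans i2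
        _ ≤ ‖v‖ * (‖A‖ * ‖v‖) := by gcongr
        _ = ‖A‖ * ‖v‖ ^ 2 := by ring
    have h2 : |t| * ‖A‖ ≤ ε / 2 := by
      have hAn : (0:ℝ) ≤ ‖A‖ := norm_nonneg A
      have : |t| * ‖A‖ ≤ δ * ‖A‖ := by gcongr
      refine this.trans ?_
      rw [hδ, div_mul_eq_mul_div, div_le_iff₀ (by positivity)]
      nlinarith
    have h3 : -((ε/2) * ‖v‖ ^ 2) ≤ t * (inner ℂ v (A v) : ℂ).re := by
      have habs : |t * (inner ℂ v (A v) : ℂ).re| ≤ (ε/2) * ‖v‖ ^ 2 := by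
        rw [abs_mul]
        calc |t| * |(inner ℂ v (A v) : ℂ).re| ≤ |t| * (‖A‖ * ‖v‖ ^ 2) := by
              gcongr
          _ = (|t| * ‖A‖) * ‖v‖ ^ 2 := by ring
          _ ≤ (ε/2) * ‖v‖ ^ 2 := by
              have := sq_nonneg ‖v‖
              gcongr
      linarith [(abs_le.mp habs).1]
    linarith [hB2 v]
  have hsa : ∀ t : ℝ, IsSelfAdjoint (B + t • A) :=
    fun t => hB.add (IsSelfAdjoint.smul (star_trivial t) hA)
  have hRA_int : ∀ t : ℝ, |t| ≤ δ → IntegrableOn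
      (fun x : ℝ => Ring.inverse (B + t • A + x • (1 : H →L[ℂ] H)) * A *
        Ring.inverse (B + x • (1 : H →L[ℂ] H))) (Set.Ioi 0) :=
    fun t ht => my_kappa_integrableOn A hε2 (hbt t ht) hε hB2
  have hL_int : IntegrableOn
      (fun x : ℝ => Ring.inverse (B + x • (1 : H →L[ℂ] H)) * A *
        Ring.inverse (B + x • (1 : H →L[ℂ] H))) (Set.Ioi 0) :=
    my_kappa_integrableOn A hε hB2 hε hB2
  -- main identity
  have hg : ∀ t : ℝ, t ≠ 0 → |t| ≤ δ →
      t⁻¹ • (cfc Real.log (B + t • A) - cfc Real.log B)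
        = ∫ x in Set.Ioi (0:ℝ), Ring.inverse (B + t • A + x • (1 : H →L[ℂ] H)) * A *
            Ring.inverse (B + x • (1 : H →L[ℂ] H)) := by
    intro t ht htδ
    obtain ⟨int1, eq1⟩ := my_log_parts (hsa t) hε2 (hbt t htδ)
    obtain ⟨int2, eq2⟩ := my_log_parts hB hε hB2
    rw [eq1, eq2, ← integral_sub int1 int2]
    have hcongr : (∫ x in Set.Ioi (0:ℝ),
        (((1+x)⁻¹ • (1 : H →L[ℂ] H) - Ring.inverse (B + t • A + x • (1 : H →L[ℂ] H)))
          - ((1+x)⁻¹ • (1 : H →L[ℂ] H) - Ring.inverse (B + x • (1 : H →L[ℂ] H)))))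
        = ∫ x in Set.Ioi (0:ℝ), t • (Ring.inverse (B + t • A + x • (1 : H →L[ℂ] H)) * A *
            Ring.inverse (B + x • (1 : H →L[ℂ] H))) := by
      refine setIntegral_congr_fun measurableSet_Ioi fun x hx => ?_
      have hx0 : (0:ℝ) ≤ x := le_of_lt hx
      have hu : IsUnit (B + x • (1 : H →L[ℂ] H)) := my_unit_shift hε hB2 hx0
      have hv : IsUnit (B + t • A + x • (1 : H →L[ℂ] H)) := my_unit_shift hε2 (hbt t htδ) hx0
      have hvu : (B + t • A + x • (1 : H →L[ℂ] H)) - (B + x • (1 : H →L[ℂ] H)) = t • A := by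
        abel
      calc ((1+x)⁻¹ • (1 : H →L[ℂ] H) - Ring.inverse (B + t • A + x • (1 : H →L[ℂ] H)))
            - ((1+x)⁻¹ • (1 : H →L[ℂ] H) - Ring.inverse (B + x • (1 : H →L[ℂ] H)))
          = Ring.inverse (B + x • (1 : H →L[ℂ] H))
            - Ring.inverse (B + t • A + x • (1 : H →L[ℂ] H)) := by abel
        _ = Ring.inverse (B + t • A + x • (1 : H →L[ℂ] H))
              * ((B + t • A + x • (1 : H →L[ℂ] H)) - (B + x • (1 : H →L[ℂ] H)))
              * Ring.inverse (B + x • (1 : H →L[ℂ] H)) := my_inverse_sub hu hv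
        _ = Ring.inverse (B + t • A + x • (1 : H →L[ℂ] H)) * (t • A)
              * Ring.inverse (B + x • (1 : H →L[ℂ] H)) := by rw [hvu]
        _ = t • (Ring.inverse (B + t • A + x • (1 : H →L[ℂ] H)) * A *
              Ring.inverse (B + x • (1 : H →L[ℂ] H))) := by
            rw [mul_smul_comm, smul_mul_assoc]
    rw [hcongr, integral_smul, smul_smul, inv_mul_cancel₀ ht, one_smul]
  -- the bound
  set K := ∫ x in Set.Ioi (0:ℝ), ((ε/2 + x) ^ 3)⁻¹ with hK
  have hbound : ∀ t : ℝ, t ≠ 0 → |t| ≤ δ →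
      ‖(∫ x in Set.Ioi (0:ℝ), Ring.inverse (B + t • A + x • (1 : H →L[ℂ] H)) * A *
            Ring.inverse (B + x • (1 : H →L[ℂ] H)))
        - ∫ x in Set.Ioi (0:ℝ), Ring.inverse (B + x • (1 : H →L[ℂ] H)) * A *
            Ring.inverse (B + x • (1 : H →L[ℂ] H))‖ ≤ (‖A‖ ^ 2 * K) * |t| := by
    intro t ht htδ
    rw [← integral_sub (hRA_int t htδ) hL_int]
    have hIb : IntegrableOn (fun x : ℝ => |t| * ‖A‖ ^ 2 * ((ε/2 + x) ^ 3)⁻¹) (Set.Ioi 0) :=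
      (my_integrableOn_inv_cube hε2).const_mul _
    refine (norm_integral_le_of_norm_le hIb ?_).trans ?_
    · filter_upwards [self_mem_ae_restrict measurableSet_Ioi] with x hx
      have hx0 : (0:ℝ) ≤ x := le_of_lt hx
      have hu : IsUnit (B + x • (1 : H →L[ℂ] H)) := my_unit_shift hε hB2 hx0
      have hv : IsUnit (B + t • A + x • (1 : H →L[ℂ] H)) := my_unit_shift hε2 (hbt t htδ) hx0
      have hvu : (B + x • (1 : H →L[ℂ] H)) - (B + t • A + x • (1 : H →L[ℂ] H)) = -(t • A) := by
        abel
      have hdiff : Ring.inverse (B + t • A + x • (1 : H →L[ℂ] H))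
            - Ring.inverse (B + x • (1 : H →L[ℂ] H))
          = Ring.inverse (B + x • (1 : H →L[ℂ] H)) * (-(t • A))
            * Ring.inverse (B + t • A + x • (1 : H →L[ℂ] H)) := by
        rw [my_inverse_sub hv hu, hvu]
      have hfull : Ring.inverse (B + t • A + x • (1 : H →L[ℂ] H)) * A *
              Ring.inverse (B + x • (1 : H →L[ℂ] H))
            - Ring.inverse (B + x • (1 : H →L[ℂ] H)) * A *
              Ring.inverse (B + x • (1 : H →L[ℂ] H))
          = (Ring.inverse (B + t • A + x • (1 : H →L[ℂ] H))
              - Ring.inverse (B + x • (1 : H →L[ℂ] H))) * A *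
              Ring.inverse (B + x • (1 : H →L[ℂ] H)) := by
        rw [sub_mul, sub_mul]
      rw [hfull, hdiff]
      have hmx : (0:ℝ) < ε/2 + x := by positivity
      have n2 : ‖Ring.inverse (B + t • A + x • (1 : H →L[ℂ] H))‖ ≤ (ε/2 + x)⁻¹ :=
        my_inverse_shift_norm hε2 (hbt t htδ) hx0
      have n1 : ‖Ring.inverse (B + x • (1 : H →L[ℂ] H))‖ ≤ (ε/2 + x)⁻¹ := by
        refine (my_inverse_shift_norm hε hB2 hx0).trans ?_
        apply inv_anti₀ hmx
        linarith
      have hb : ‖-(t • A)‖ = |t| * ‖A‖ := by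
        rw [norm_neg, norm_smul, Real.norm_eq_abs]
      set a := Ring.inverse (B + x • (1 : H →L[ℂ] H)) with ha
      set c' := Ring.inverse (B + t • A + x • (1 : H →L[ℂ] H)) with hc'
      calc ‖a * -(t • A) * c' * A * a‖
          ≤ ‖a * -(t • A) * c' * A‖ * ‖a‖ := norm_mul_le _ _
        _ ≤ (‖a * -(t • A) * c'‖ * ‖A‖) * ‖a‖ := by gcongr; exact norm_mul_le _ _
        _ ≤ ((‖a * -(t • A)‖ * ‖c'‖) * ‖A‖) * ‖a‖ := by gcongr; exact norm_mul_le _ _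
        _ ≤ (((‖a‖ * ‖-(t • A)‖) * ‖c'‖) * ‖A‖) * ‖a‖ := by gcongr; exact norm_mul_le _ _
        _ = (((‖a‖ * (|t| * ‖A‖)) * ‖c'‖) * ‖A‖) * ‖a‖ := by rw [hb]
        _ ≤ ((((ε/2 + x)⁻¹ * (|t| * ‖A‖)) * (ε/2 + x)⁻¹) * ‖A‖) * (ε/2 + x)⁻¹ := by
            gcongr
        _ = |t| * ‖A‖ ^ 2 * ((ε/2 + x) ^ 3)⁻¹ := by
            rw [pow_two, show ((ε/2 + x) ^ 3 : ℝ) = (ε/2+x) * (ε/2+x) * (ε/2+x) by ring,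
              mul_inv, mul_inv]
            ring
    · have heq : ∫ x in Set.Ioi (0:ℝ), |t| * ‖A‖ ^ 2 * ((ε/2 + x) ^ 3)⁻¹
          = (|t| * ‖A‖ ^ 2) * K := by
        rw [hK, ← integral_const_mul]
      rw [heq]
      exact le_of_eq (by ring)
  -- conclusion
  rw [tendsto_iff_norm_sub_tendsto_zero]
  have htarget : Tendsto (fun t : ℝ => (‖A‖ ^ 2 * K) * |t|) (nhdsWithin 0 {0}ᶜ) (nhds 0) := by
    have h0 : Tendsto (fun t : ℝ => (‖A‖ ^ 2 * K) * |t|) (nhds 0)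
        (nhds ((‖A‖ ^ 2 * K) * |0|)) :=
      (continuous_const.mul continuous_abs).tendsto 0
    simp only [abs_zero, mul_zero] at h0
    exact h0.mono_left nhdsWithin_le_nhds
  refine squeeze_zero' ?_ ?_ htarget
  · filter_upwards with t using norm_nonneg _
  · have hev1 : ∀ᶠ t in nhdsWithin (0:ℝ) {0}ᶜ, |t| < δ := by
      apply mem_nhdsWithin_of_mem_nhds
      have hball := Metric.ball_mem_nhds (0:ℝ) hδ0
      have : Metric.ball (0:ℝ) δ = {t : ℝ | |t| < δ} := by
        ext t
        simp [Real.dist_eq]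
      rwa [this] at hball
    have hev2 : ∀ᶠ t in nhdsWithin (0:ℝ) {0}ᶜ, t ∈ ({0}ᶜ : Set ℝ) := eventually_mem_nhdsWithin
    filter_upwards [hev1, hev2] with t h1 h2
    have ht0 : t ≠ 0 := h2
    rw [hg t ht0 (le_of_lt h1)]
    exact hbound t ht0 (le_of_lt h1)

end FinalTheorem
end

section
/- Let A be self-adjoint, B positive semidefinite bounded operators on a Hilbert space with A² ≤ α²B² for some α > 0. Then the integral ∫_0^∞ B(B+xI)^{-1}A(B+xI)^{-1} dx converges in operator norm and its norm is at most α‖B‖. -/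
open Filter MeasureTheory Set

section Aux

variable {H : Type*} [NormedAddCommGroup H] [InnerProductSpace ℂ H] [CompleteSpace H]

lemma BDlog_unit_aux (B : H →L[ℂ] H) (hB : 0 ≤ B) {x : ℝ} (hx : 0 < x) :
    IsUnit (B + x • (1 : H →L[ℂ] H)) := by
  have h1 : (-x) ∉ spectrum ℝ B := fun h => by
    linarith [spectrum_nonneg_of_nonneg hB h]
  have h2 := spectrum.notMem_iff.mp h1
  rw [Algebra.algebraMap_eq_smul_one, neg_smul] at h2
  have h3 : -(x • (1 : H →L[ℂ] H)) - B = -(B + x • 1) := by abel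
  rw [h3] at h2
  simpa using h2.neg

lemma BDlog_key_bound (A B : H →L[ℂ] H) (hA : IsSelfAdjoint A) (hB : 0 ≤ B)
    (α : ℝ) (hα : 0 < α) (hAB : A * A ≤ (α ^ 2 : ℝ) • (B * B)) {x : ℝ} (hx : 0 < x) :
    ‖B * Ring.inverse (B + x • (1 : H →L[ℂ] H)) * A * Ring.inverse (B + x • (1 : H →L[ℂ] H))‖
      ≤ α * ‖B‖ ^ 2 / (‖B‖ + x) ^ 2 := by
  have hBsa : IsSelfAdjoint B := .of_nonneg hB
  have hspec : ∀ t ∈ spectrum ℝ B, 0 ≤ t := fun t ht => spectrum_nonneg_of_nonneg hB ht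
  have hne : ∀ t ∈ spectrum ℝ B, t + x ≠ 0 := fun t ht => by
    have := hspec t ht; positivity
  have hcont : ContinuousOn (fun t : ℝ => (t + x)⁻¹) (spectrum ℝ B) :=
    ContinuousOn.inv₀ (by fun_prop) hne
  have hadd : B + x • (1 : H →L[ℂ] H) = cfc (fun t : ℝ => t + x) B := by
    rw [cfc_add _ _ _ (by fun_prop) (by fun_prop), cfc_id' ℝ B, cfc_const x B,
      Algebra.algebraMap_eq_smul_one]
  set T := Ring.inverse (B + x • (1 : H →L[ℂ] H)) with hTdef
  have hT : T = cfc (fun t : ℝ => (t + x)⁻¹) B := by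
    rw [hTdef, hadd, cfc_inv _ _ hne]
  have hBT : B * T = cfc (fun t : ℝ => t * (t + x)⁻¹) B := by
    rw [cfc_mul _ _ B (by fun_prop) hcont, cfc_id' ℝ B, hT]
  have hBTnorm : ‖B * T‖ ≤ ‖B‖ / (‖B‖ + x) := by
    rw [hBT]
    apply norm_cfc_le (by positivity)
    intro t ht
    have h0 : 0 ≤ t := hspec t ht
    have h1 : t ≤ ‖B‖ := le_trans (le_abs_self t) <| by
      simpa using spectrum.norm_le_norm_mul_of_mem ht |>.trans
        (mul_le_mul_of_nonneg_left ContinuousLinearMap.norm_id_le (norm_nonneg B))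
    rw [Real.norm_eq_abs, abs_of_nonneg (by positivity), ← div_eq_mul_inv,
      div_le_div_iff₀ (by positivity) (by positivity)]
    nlinarith
  have hATnorm : ‖A * T‖ ≤ α * ‖B * T‖ := by
    have hsq : ‖A * T‖ ^ 2 = ‖star (A * T) * (A * T)‖ := by
      rw [CStarRing.norm_star_mul_self]; ring
    have hstar : star (A * T) * (A * T) = star T * (A * A) * T := by
      rw [star_mul, hA.star_eq]; noncomm_ring
    have hconj := star_left_conjugate_le_conjugate hAB T
    have hpos : (0 : H →L[ℂ] H) ≤ star T * (A * A) * T := by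
      rw [← hstar]; exact star_mul_self_nonneg _
    have hn := CStarAlgebra.norm_le_norm_of_nonneg_of_le hpos hconj
    have hrhs : star T * ((α ^ 2 : ℝ) • (B * B)) * T
        = (α ^ 2 : ℝ) • (star (B * T) * (B * T)) := by
      rw [star_mul, hBsa.star_eq]
      simp only [smul_mul_assoc, mul_smul_comm]
      congr 1
    rw [hrhs, ← hstar] at hn
    have h2 : ‖A * T‖ ^ 2 ≤ α ^ 2 * ‖B * T‖ ^ 2 := by
      rw [hsq]
      calc ‖star (A * T) * (A * T)‖ ≤ ‖(α ^ 2 : ℝ) • (star (B * T) * (B * T))‖ := hn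
        _ = α ^ 2 * ‖B * T‖ ^ 2 := by
            rw [norm_smul, CStarRing.norm_star_mul_self, Real.norm_eq_abs,
              abs_of_pos (by positivity)]
            ring
    rw [← mul_pow] at h2
    exact (pow_le_pow_iff_left₀ (norm_nonneg _) (by positivity) two_ne_zero).mp h2
  have h3 : ‖A * T‖ ≤ α * (‖B‖ / (‖B‖ + x)) :=
    hATnorm.trans (mul_le_mul_of_nonneg_left hBTnorm hα.le)
  calc ‖B * T * A * T‖ = ‖(B * T) * (A * T)‖ := by rw [mul_assoc]
    _ ≤ ‖B * T‖ * ‖A * T‖ := norm_mul_le _ _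
    _ ≤ (‖B‖ / (‖B‖ + x)) * (α * (‖B‖ / (‖B‖ + x))) :=
        mul_le_mul hBTnorm h3 (norm_nonneg _) (by positivity)
    _ = α * ‖B‖ ^ 2 / (‖B‖ + x) ^ 2 := by
        field_simp

lemma BDlog_gauge_aux (a c : ℝ) (ha : 0 < a) (hc : 0 < c) :
    IntegrableOn (fun x : ℝ => a * c ^ 2 / (c + x) ^ 2) (Ioi 0) volume ∧
    ∫ x in Ioi (0:ℝ), a * c ^ 2 / (c + x) ^ 2 = a * c := by
  have hderiv : ∀ x ∈ Ici (0:ℝ), HasDerivAt (fun y : ℝ => -(a * c ^ 2) * (c + y)⁻¹)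
      (a * c ^ 2 / (c + x) ^ 2) x := by
    intro x hx
    have hcx : c + x ≠ 0 := by simp only [mem_Ici] at hx; positivity
    have h := (((hasDerivAt_id x).const_add c).inv hcx).const_mul (-(a * c ^ 2))
    exact h.congr_deriv (by simp only [id]; ring)
  have hpos : ∀ x ∈ Ioi (0:ℝ), 0 ≤ a * c ^ 2 / (c + x) ^ 2 := by
    intro x hx; positivity
  have htend : Tendsto (fun y : ℝ => -(a * c ^ 2) * (c + y)⁻¹) atTop (nhds 0) := by
    have h : Tendsto (fun y : ℝ => (c + y)⁻¹) atTop (nhds 0) :=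
      tendsto_inv_atTop_zero.comp (tendsto_atTop_add_const_left _ c tendsto_id)
    simpa using h.const_mul (-(a * c ^ 2))
  refine ⟨integrableOn_Ioi_deriv_of_nonneg' hderiv hpos htend, ?_⟩
  rw [integral_Ioi_of_hasDerivAt_of_nonneg' hderiv hpos htend]
  field_simp
  ring

end Aux

/-- for `A` self-adjoint and `B ≥ 0` bounded with `A² ≤ α²B²` for some `α > 0`,
the integral `∫_0^∞ B(B+xI)⁻¹A(B+xI)⁻¹ dx` converges in operator norm and its norm is at most
`α‖B‖`. -/
theorem BDlog_integral_converges {H : Type*} [NormedAddCommGroup H] [InnerProductSpace ℂ H]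
    [CompleteSpace H] (A B : H →L[ℂ] H) (hA : IsSelfAdjoint A) (hB : 0 ≤ B)
    (α : ℝ) (hα : 0 < α) (hAB : A * A ≤ (α ^ 2 : ℝ) • (B * B)) :
    ∃ F : H →L[ℂ] H,
      Tendsto (fun t : ℝ => ∫ x in Set.Ioc (0 : ℝ) t,
          B * Ring.inverse (B + (x : ℝ) • (1 : H →L[ℂ] H)) * A *
            Ring.inverse (B + (x : ℝ) • (1 : H →L[ℂ] H)))
        atTop (nhds F) ∧ ‖F‖ ≤ α * ‖B‖ := by
  by_cases hB0 : B = 0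
  · refine ⟨0, ?_, by simp; positivity⟩
    subst hB0
    simp only [zero_mul, integral_zero]
    exact tendsto_const_nhds
  · have hc : (0 : ℝ) < ‖B‖ := norm_pos_iff.mpr hB0
    set f : ℝ → (H →L[ℂ] H) := fun x =>
      B * Ring.inverse (B + x • (1 : H →L[ℂ] H)) * A *
        Ring.inverse (B + x • (1 : H →L[ℂ] H)) with hf
    have hfc : ContinuousOn f (Ioi 0) := by
      intro x hx
      apply ContinuousAt.continuousWithinAt
      have hu := BDlog_unit_aux B hB hx
      have hvc : Continuous fun y : ℝ => B + y • (1 : H →L[ℂ] H) :=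
        continuous_const.add (continuous_id.smul continuous_const)
      have h1 : ContinuousAt Ring.inverse (B + x • (1 : H →L[ℂ] H)) :=
        hu.unit_spec ▸ NormedRing.inverse_continuousAt hu.unit
      have hinv : ContinuousAt (fun y : ℝ => Ring.inverse (B + y • (1 : H →L[ℂ] H))) x :=
        ContinuousAt.comp (f := fun y : ℝ => B + y • (1 : H →L[ℂ] H)) h1 hvc.continuousAt
      exact ((continuousAt_const.mul hinv).mul continuousAt_const).mul hinv
    have hmeas : AEStronglyMeasurable f (volume.restrict (Ioi 0)) :=
      hfc.aestronglyMeasurable_of_isSeparable measurableSet_Ioi (TopologicalSpace.IsSeparable.of_separableSpace _)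
    obtain ⟨hgint, hgval⟩ := BDlog_gauge_aux α ‖B‖ hα hc
    have hae : ∀ᵐ x ∂volume.restrict (Ioi 0), ‖f x‖ ≤ α * ‖B‖ ^ 2 / (‖B‖ + x) ^ 2 :=
      (ae_restrict_iff' measurableSet_Ioi).mpr
        (ae_of_all _ fun x hx => BDlog_key_bound A B hA hB α hα hAB hx)
    have hint : IntegrableOn f (Ioi 0) volume := Integrable.mono' hgint hmeas hae
    have hU : ⋃ t : ℝ, Ioc (0:ℝ) t = Ioi 0 := by
      ext y; simp [mem_iUnion]
    refine ⟨∫ x in Ioi (0:ℝ), f x, ?_, ?_⟩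
    · have := tendsto_setIntegral_of_monotone (μ := volume) (f := f)
        (s := fun t : ℝ => Ioc (0:ℝ) t) (fun t => measurableSet_Ioc)
        (fun s t hst => Ioc_subset_Ioc_right hst) (hU ▸ hint)
      rwa [hU] at this
    · calc ‖∫ x in Ioi (0:ℝ), f x‖ ≤ ∫ x in Ioi (0:ℝ), α * ‖B‖ ^ 2 / (‖B‖ + x) ^ 2 :=
            norm_integral_le_of_norm_le hgint hae
        _ = α * ‖B‖ := hgval
end
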